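/- Let m ∈ ℕ, (i_1, …, i_m) ∈ N^m and a ∈ A. Let w be the σ-composite of the word (i_1, …, i_m) at a and let b := i_1⋯i_m ▷ a be its target. Then the length ℓ of the word (i_1, …, i_m) at a equals the cardinality |w(R⁺_a) ∩ (−R⁺_b)|. -/

import Mathlib

open Pointwise

variable {N : Type*} {A : Type*}

/-- The element `(i j)^m ▷ a` for the action of `F₂(N)` on `A`. -/
def altIter (act : N → A → A) (i j : N) (a : A) : ℕ → A
  | 0 => a
  | m + 1 => act i (act j (altIter act i j a m))

/-- The set `Θ(i,j;a)`. -/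
def ThetaSet (act : N → A → A) (i j : N) (a : A) : Set A :=
  {x | ∃ m : ℕ, x = altIter act i j a m ∨ x = altIter act j i a m}

/-- The set of `ℕ₀`-linear combinations of elements of `s`. -/
def NSpan (s : Set (N →₀ ℝ)) : Set (N →₀ ℝ) :=
  (AddSubmonoid.closure s : Set (N →₀ ℝ))

/-- A generalized root system: a transitive action of `F₂(N)` on `A` (axiom (1)),
roots `root a ⊆ ℝ^{(N)}` with simple roots `α n a` forming a basis (axiom (2)),
and maps `σ i a ∈ GL(ℝ^{(N)})`, satisfying axioms (3)-(7). -/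
structure GRS (N : Type*) (A : Type*) where
  act : N → A → A
  act_invol : ∀ n a, act n (act n a) = a
  act_trans : ∀ a b : A, ∃ l : List N, l.foldr act a = b
  root : A → Set (N →₀ ℝ)
  α : N → A → N →₀ ℝ
  α_mem : ∀ n a, α n a ∈ root a
  α_indep : ∀ a, LinearIndependent ℝ fun n => α n a
  α_span : ∀ a, Submodule.span ℝ (Set.range fun n => α n a) = ⊤
  σ : N → A → (N →₀ ℝ) ≃ₗ[ℝ] (N →₀ ℝ)
  ax3 : ∀ a, root a =
    root a ∩ NSpan (Set.range fun n => α n a) ∪ -(root a ∩ NSpan (Set.range fun n => α n a))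
  ax4 : ∀ i a, (Set.range fun r : ℝ => r • α i a) ∩ root a = {α i a, -α i a}
  ax5_root : ∀ i a, ⇑(σ i a) '' root a = root (act i a)
  ax5_diag : ∀ i a, σ i a (α i a) = -α i (act i a)
  ax5_off : ∀ i a j, j ≠ i →
    ∃ m : ℕ, σ i a (α j a) = α j (act i a) + (m : ℝ) • α i (act i a)
  ax6 : ∀ i a v, σ i (act i a) (σ i a v) = v
  ax7 : ∀ a (i j : N), i ≠ j →
    (root a ∩ {β | ∃ p q : ℕ, β = (p : ℝ) • α i a + (q : ℝ) • α j a}).Finite →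
    (ThetaSet act i j a).Finite ∧
      (ThetaSet act i j a).ncard ∣
        (root a ∩ {β | ∃ p q : ℕ, β = (p : ℝ) • α i a + (q : ℝ) • α j a}).ncard

/-- The positive roots `R⁺_a`. -/
def GRS.pos (G : GRS N A) (a : A) : Set (N →₀ ℝ) :=
  G.root a ∩ NSpan (Set.range fun n => G.α n a)

/-- The target `i₁ ⋯ i_m ▷ a` of the word `(i₁, …, i_m)` at `a`. -/
def GRS.target (G : GRS N A) (l : List N) (a : A) : A :=
  l.foldr G.act a

/-- The σ-composite `σ_{i₁,b₁} ∘ ⋯ ∘ σ_{i_m,b_m}` of the word `(i₁, …, i_m)` at `a`. -/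
noncomputable def GRS.wmap (G : GRS N A) : List N → A → (N →₀ ℝ) ≃ₗ[ℝ] (N →₀ ℝ)
  | [], _ => LinearEquiv.refl ℝ _
  | i :: l, a => (G.wmap l a).trans (G.σ i (G.target l a))

/-- The length `ℓ` of a word at `a`: the minimal length of a word at `a`
with the same target and the same σ-composite. -/
noncomputable def GRS.len (G : GRS N A) (l : List N) (a : A) : ℕ :=
  sInf {m | ∃ l' : List N, l'.length = m ∧
    G.target l' a = G.target l a ∧ G.wmap l' a = G.wmap l a}

/-- A word of length `m` at `a` is reduced if `ℓ = m`. -/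
def GRS.Reduced (G : GRS N A) (l : List N) (a : A) : Prop :=
  G.len l a = l.length

/-- `m_{i,j;a} = |R_a ∩ (ℕ₀ α_{i,a} + ℕ₀ α_{j,a})|`. -/
noncomputable def GRS.mij (G : GRS N A) (i j : N) (a : A) : ℕ :=
  (G.root a ∩ {β | ∃ p q : ℕ, β = (p : ℝ) • G.α i a + (q : ℝ) • G.α j a}).ncard

/-- The alternating word `(i₁, …, i_m)` with `i_k = i` for `k` odd (leftmost letter `i`). -/
def altList (i j : N) : ℕ → List N
  | 0 => []
  | m + 1 => i :: altList j i m

/-- The alternating word of length `m` in the letters `i,j` whose rightmost letter is `i`. -/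
def altR (i j : N) : ℕ → List N
  | 0 => []
  | m + 1 => altR j i m ++ [i]

/-- `a_m = i_m ⋯ i_1 ▷ a` for the alternating sequence with `i_k = i` for odd `k`. -/
def aIter (act : N → A → A) (i j : N) (a : A) : ℕ → A
  | 0 => a
  | m + 1 => act (if m % 2 = 0 then i else j) (aIter act i j a m)

/-- The set of real roots `R^{re}_a`. -/
def GRS.reroot (G : GRS N A) (a : A) : Set (N →₀ ℝ) :=
  {β | ∃ (b : A) (l : List N) (n : N), G.target l b = a ∧ β = G.wmap l b (G.α n b)}

/-- The word `C(i,j;a)`: alternating of length `m_{i,j;a} - 1` with leftmost letter `i`. -/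
noncomputable def GRS.Cword (G : GRS N A) (i j : N) (a : A) : List N :=
  altList i j (G.mij i j a - 1)

namespace GRS

open scoped Classical

variable (G : GRS N A)

local notation "V" => (N →₀ ℝ)

/-- The basis of simple roots at `a`. -/
noncomputable def bas (a : A) : Module.Basis N ℝ V :=
  Module.Basis.mk (G.α_indep a) (by rw [G.α_span])

@[simp] lemma bas_apply (a : A) (n : N) : G.bas a n = G.α n a := by
  simp [GRS.bas]

lemma repr_alpha (a : A) (n m : N) :
    (G.bas a).repr (G.α n a) m = if n = m then 1 else 0 := by
  have : G.α n a = G.bas a n := (G.bas_apply a n).symm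
  rw [this, Module.Basis.repr_self]
  simp [Finsupp.single_apply]

lemma nspan_coords {a : A} {β : V} (h : β ∈ NSpan (Set.range fun n => G.α n a)) :
    ∀ m, ∃ k : ℕ, (G.bas a).repr β m = (k : ℝ) := by
  induction h using AddSubmonoid.closure_induction with
  | mem x hx =>
    obtain ⟨n, rfl⟩ := hx
    intro m
    rw [G.repr_alpha]
    by_cases hnm : n = m
    · exact ⟨1, by simp [hnm]⟩
    · exact ⟨0, by simp [hnm]⟩
  | zero => intro m; exact ⟨0, by simp⟩
  | add x y hx hy ihx ihy =>
    intro m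
    obtain ⟨k₁, hk₁⟩ := ihx m
    obtain ⟨k₂, hk₂⟩ := ihy m
    exact ⟨k₁ + k₂, by push_cast; rw [← hk₁, ← hk₂]; simp⟩

lemma pos_coords {a : A} {β : V} (h : β ∈ G.pos a) (m : N) :
    0 ≤ (G.bas a).repr β m := by
  obtain ⟨k, hk⟩ := G.nspan_coords h.2 m
  rw [hk]; positivity

lemma pos_sub_root {a : A} {β : V} (h : β ∈ G.pos a) : β ∈ G.root a := h.1

lemma root_pos_or_neg {a : A} {β : V} (h : β ∈ G.root a) :
    β ∈ G.pos a ∨ -β ∈ G.pos a := by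
  have := G.ax3 a
  rw [this] at h
  rcases h with h | h
  · exact Or.inl h
  · right
    rw [Set.mem_neg] at h
    exact h

lemma alpha_nspan (a : A) (n : N) : G.α n a ∈ NSpan (Set.range fun n => G.α n a) :=
  AddSubmonoid.subset_closure ⟨n, rfl⟩

lemma alpha_pos (a : A) (n : N) : G.α n a ∈ G.pos a :=
  ⟨G.α_mem n a, G.alpha_nspan a n⟩

lemma alpha_ne_zero (a : A) (n : N) : G.α n a ≠ 0 :=
  (G.α_indep a).ne_zero n

lemma zero_not_root [Nonempty N] (a : A) : (0 : V) ∉ G.root a := by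
  intro h0
  obtain ⟨i⟩ := ‹Nonempty N›
  have : (0 : V) ∈ (Set.range fun r : ℝ => r • G.α i a) ∩ G.root a :=
    ⟨⟨0, by simp⟩, h0⟩
  rw [G.ax4] at this
  rcases this with h | h
  · exact G.alpha_ne_zero a i h.symm
  · exact G.alpha_ne_zero a i (by simpa using congrArg Neg.neg h.symm)

lemma pos_ne_zero [Nonempty N] {a : A} {β : V} (h : β ∈ G.pos a) : β ≠ 0 := by
  rintro rfl; exact G.zero_not_root a h.1

lemma pos_neg_false [Nonempty N] {a : A} {β : V} (h : β ∈ G.pos a)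
    (h' : -β ∈ G.pos a) : False := by
  apply G.pos_ne_zero h
  apply (G.bas a).repr.injective
  ext m
  have h1 := G.pos_coords h m
  have h2 := G.pos_coords h' m
  rw [map_neg] at h2
  simp only [Finsupp.coe_neg, Pi.neg_apply] at h2
  simp only [map_zero, Finsupp.coe_zero, Pi.zero_apply]
  linarith

lemma root_pos_of_coord_pos [Nonempty N] {a : A} {β : V} (h : β ∈ G.root a)
    {m : N} (hm : 0 < (G.bas a).repr β m) : β ∈ G.pos a := by
  rcases G.root_pos_or_neg h with h' | h'
  · exact h'
  · exfalso
    have := G.pos_coords h' m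
    rw [map_neg] at this
    simp only [Finsupp.coe_neg, Pi.neg_apply] at this
    linarith

/-- convexity: a root which is an ℕ-combination of two positive roots is positive -/
lemma pos_of_combo2 {a : A} {β γ₁ γ₂ : V} (hroot : β ∈ G.root a)
    (h₁ : γ₁ ∈ G.pos a) (h₂ : γ₂ ∈ G.pos a) (x y : ℕ)
    (hβ : β = (x : ℝ) • γ₁ + (y : ℝ) • γ₂) : β ∈ G.pos a := by
  refine ⟨hroot, ?_⟩
  rw [hβ]
  rw [Nat.cast_smul_eq_nsmul, Nat.cast_smul_eq_nsmul]
  exact AddSubmonoid.add_mem _ (AddSubmonoid.nsmul_mem _ h₁.2 x)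
    (AddSubmonoid.nsmul_mem _ h₂.2 y)

end GRS
namespace GRS

open scoped Classical

variable (G : GRS N A)

local notation "V" => (N →₀ ℝ)

lemma repr_ext {a : A} {β γ : V}
    (h : ∀ m, (G.bas a).repr β m = (G.bas a).repr γ m) : β = γ := by
  apply (G.bas a).repr.injective
  ext m; exact h m

/-- decomposition for an element supported on one coordinate -/
lemma repr_decomp1 {a : A} {β : V} {s : N}
    (h : ∀ m, m ≠ s → (G.bas a).repr β m = 0) :
    β = ((G.bas a).repr β s) • G.α s a := by
  apply G.repr_ext
  intro m
  rw [map_smul]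
  simp only [Finsupp.coe_smul, Pi.smul_apply, smul_eq_mul]
  rw [G.repr_alpha]
  by_cases hm : m = s
  · subst hm; simp
  · rw [h m hm, if_neg (fun h' : s = m => hm h'.symm), mul_zero]

/-- decomposition for an element supported on two coordinates -/
lemma repr_decomp2 {a : A} {β : V} {s t : N} (hst : s ≠ t)
    (h : ∀ m, m ≠ s → m ≠ t → (G.bas a).repr β m = 0) :
    β = ((G.bas a).repr β s) • G.α s a + ((G.bas a).repr β t) • G.α t a := by
  apply G.repr_ext
  intro m
  rw [map_add, map_smul, map_smul]
  simp only [Finsupp.coe_add, Finsupp.coe_smul, Pi.add_apply, Pi.smul_apply, smul_eq_mul]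
  rw [G.repr_alpha, G.repr_alpha]
  by_cases hms : m = s
  · subst hms
    rw [if_pos rfl, if_neg (fun h' : t = m => hst h'.symm)]
    simp
  · by_cases hmt : m = t
    · subst hmt
      rw [if_pos rfl, if_neg (fun h' : s = m => hms h'.symm)]
      simp
    · rw [h m hms hmt, if_neg (fun h' : s = m => hms h'.symm),
        if_neg (fun h' : t = m => hmt h'.symm)]
      simp

/-- coordinates other than `i` are preserved by `σ i a` -/
lemma coord_sigma {i : N} {a : A} {j : N} (hj : j ≠ i) (v : V) :
    (G.bas (G.act i a)).repr (G.σ i a v) j = (G.bas a).repr v j := by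
  have hmap : ((G.bas (G.act i a)).coord j).comp ((G.σ i a) : V →ₗ[ℝ] V)
      = (G.bas a).coord j := by
    apply (G.bas a).ext
    intro n
    simp only [LinearMap.comp_apply, LinearEquiv.coe_coe, Module.Basis.coord_apply, G.bas_apply]
    by_cases hn : n = i
    · rw [hn]
      rw [G.ax5_diag]
      rw [map_neg]
      simp only [Finsupp.coe_neg, Pi.neg_apply]
      rw [G.repr_alpha, G.repr_alpha]
      rw [if_neg (fun h : i = j => hj h.symm)]
      simp
    · obtain ⟨m, hm⟩ := G.ax5_off i a n (by exact hn)
      rw [hm, map_add, map_smul]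
      simp only [Finsupp.coe_add, Finsupp.coe_smul, Pi.add_apply, Pi.smul_apply, smul_eq_mul]
      rw [G.repr_alpha, G.repr_alpha, G.repr_alpha]
      rw [if_neg (fun h : i = j => hj h.symm)]
      simp
  calc (G.bas (G.act i a)).repr (G.σ i a v) j
      = ((G.bas (G.act i a)).coord j).comp ((G.σ i a) : V →ₗ[ℝ] V) v := rfl
    _ = (G.bas a).coord j v := by rw [hmap]
    _ = (G.bas a).repr v j := rfl

lemma sigma_mem_root {i : N} {a : A} {β : V} (h : β ∈ G.root a) :
    G.σ i a β ∈ G.root (G.act i a) := by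
  rw [← G.ax5_root]
  exact Set.mem_image_of_mem _ h

/-- KEY: σ i a maps positive roots other than α i to positive roots other than α i -/
lemma sigma_pos [Nonempty N] {i : N} {a : A} {β : V} (h : β ∈ G.pos a)
    (hne : β ≠ G.α i a) :
    G.σ i a β ∈ G.pos (G.act i a) ∧ G.σ i a β ≠ G.α i (G.act i a) := by
  have hroot : G.σ i a β ∈ G.root (G.act i a) := G.sigma_mem_root h.1
  by_cases hcase : ∃ j, j ≠ i ∧ (G.bas a).repr β j ≠ 0
  · obtain ⟨j, hj, hjne⟩ := hcase
    have hpos : 0 < (G.bas a).repr β j := lt_of_le_of_ne (G.pos_coords h j) (Ne.symm hjne)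
    have hcoord : (G.bas (G.act i a)).repr (G.σ i a β) j = (G.bas a).repr β j :=
      G.coord_sigma hj β
    constructor
    · exact G.root_pos_of_coord_pos hroot (by rw [hcoord]; exact hpos)
    · intro heq
      rw [heq, G.repr_alpha, if_neg (fun h : i = j => hj h.symm)] at hcoord
      rw [← hcoord] at hpos
      exact lt_irrefl _ hpos
  · push_neg at hcase
    exfalso
    have hβ : β = ((G.bas a).repr β i) • G.α i a :=
      G.repr_decomp1 (fun m hm => hcase m hm)
    have : β ∈ (Set.range fun r : ℝ => r • G.α i a) ∩ G.root a :=
      ⟨⟨(G.bas a).repr β i, hβ.symm⟩, h.1⟩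
    rw [G.ax4] at this
    rcases this with h' | h'
    · exact hne h'
    · refine G.pos_neg_false (G.alpha_pos a i) ?_
      rw [← h']
      simpa using h

lemma sigma_symm (i : N) (a : A) : (G.σ i a).symm = G.σ i (G.act i a) := by
  apply LinearEquiv.toLinearMap_injective
  apply LinearMap.ext
  intro v
  apply (G.σ i a).injective
  simp only [LinearEquiv.coe_coe, LinearEquiv.apply_symm_apply]
  have h6 := G.ax6 i (G.act i a) v
  rw [G.act_invol] at h6
  exact h6.symm

lemma sigma_symm_alpha (i : N) (a : A) :
    (G.σ i a).symm (G.α i (G.act i a)) = - G.α i a := by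
  rw [G.sigma_symm]
  have := G.ax5_diag i (G.act i a)
  rw [G.act_invol] at this
  exact this

/-- characterization of when `σ i a x` is a negative root -/
lemma sigma_negpos_iff [Nonempty N] {i : N} {a : A} {x : V} (hx : x ∈ G.root a) :
    G.σ i a x ∈ -G.pos (G.act i a) ↔
      (x ∈ -G.pos a ∧ x ≠ -G.α i a) ∨ x = G.α i a := by
  constructor
  · intro hneg
    rw [Set.mem_neg] at hneg
    rcases G.root_pos_or_neg hx with hp | hp
    · right
      by_contra hne
      exact G.pos_neg_false (G.sigma_pos hp hne).1 hneg
    · left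
      constructor
      · rw [Set.mem_neg]; exact hp
      · intro heq
        rw [heq] at hneg
        rw [map_neg] at hneg
        rw [G.ax5_diag] at hneg
        rw [neg_neg] at hneg
        exact G.pos_neg_false hneg (by rw [neg_neg]; exact G.alpha_pos _ i)
  · rintro (⟨hneg, hne⟩ | rfl)
    · rw [Set.mem_neg] at hneg ⊢
      rw [← map_neg]
      have hnne : -x ≠ G.α i a := fun h => hne (by rw [← h]; simp)
      exact (G.sigma_pos hneg hnne).1
    · rw [G.ax5_diag, Set.mem_neg, neg_neg]
      exact G.alpha_pos _ i

end GRS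
namespace GRS

open scoped Classical

variable (G : GRS N A)

local notation "V" => (N →₀ ℝ)

@[simp] lemma target_nil (a : A) : G.target [] a = a := rfl

@[simp] lemma target_cons (i : N) (l : List N) (a : A) :
    G.target (i :: l) a = G.act i (G.target l a) := rfl

@[simp] lemma wmap_nil (a : A) : G.wmap [] a = LinearEquiv.refl ℝ V := rfl

@[simp] lemma wmap_cons (i : N) (l : List N) (a : A) :
    G.wmap (i :: l) a = (G.wmap l a).trans (G.σ i (G.target l a)) := rfl

lemma target_append (l₁ l₂ : List N) (a : A) :
    G.target (l₁ ++ l₂) a = G.target l₁ (G.target l₂ a) := by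
  simp [GRS.target, List.foldr_append]

lemma wmap_append (l₁ l₂ : List N) (a : A) :
    G.wmap (l₁ ++ l₂) a = (G.wmap l₂ a).trans (G.wmap l₁ (G.target l₂ a)) := by
  induction l₁ with
  | nil => simp
  | cons i l₁ ih =>
    simp only [List.cons_append, wmap_cons, ih, G.target_append]
    exact LinearEquiv.ext (fun v => rfl)

lemma wmap_root {l : List N} {a : A} {β : V} (h : β ∈ G.root a) :
    G.wmap l a β ∈ G.root (G.target l a) := by
  induction l with
  | nil => simpa using h
  | cons i l ih => simpa using G.sigma_mem_root ih

lemma wmap_reverse (l : List N) (a : A) :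
    G.target l.reverse (G.target l a) = a ∧
      G.wmap l.reverse (G.target l a) = (G.wmap l a).symm := by
  induction l generalizing a with
  | nil => exact ⟨rfl, rfl⟩
  | cons i l ih =>
    constructor
    · have h := (ih a).1
      rw [List.reverse_cons, G.target_append]
      simpa [G.act_invol] using h
    · rw [List.reverse_cons, G.wmap_append, target_cons]
      have h1 : G.wmap [i] (G.act i (G.target l a)) = (G.σ i (G.target l a)).symm := by
        simp [G.sigma_symm]
      have h2 : G.target [i] (G.act i (G.target l a)) = G.target l a := by
        simp [G.act_invol]
      rw [h1, h2, (ih a).2]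
      apply LinearEquiv.toLinearMap_injective
      apply LinearMap.ext
      intro v
      simp

lemma wmap_symm_root {l : List N} {a : A} {β : V} (h : β ∈ G.root (G.target l a)) :
    (G.wmap l a).symm β ∈ G.root a := by
  have := G.wmap_root (l := l.reverse) (a := G.target l a) h
  rw [(G.wmap_reverse l a).1, (G.wmap_reverse l a).2] at this
  exact this

/-- The inversion set of a word, pulled back to `a`. -/
def Jset (l : List N) (a : A) : Set V :=
  {β | β ∈ G.pos a ∧ G.wmap l a β ∈ -G.pos (G.target l a)}

lemma Jset_congr {l l' : List N} {a : A} (ht : G.target l' a = G.target l a)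
    (hw : G.wmap l' a = G.wmap l a) : G.Jset l' a = G.Jset l a := by
  unfold GRS.Jset
  rw [ht, hw]

@[simp] lemma Jset_nil [Nonempty N] (a : A) : G.Jset [] a = ∅ := by
  ext β
  simp only [GRS.Jset, Set.mem_setOf_eq, Set.mem_empty_iff_false, iff_false, not_and]
  intro hβ h
  rw [target_nil, Set.mem_neg] at h
  exact G.pos_neg_false hβ (by simpa using h)

/-- the pullback of the new simple root in a one-step extension -/
noncomputable def stepRoot (i : N) (l : List N) (a : A) : V :=
  (G.wmap l a).symm (G.α i (G.target l a))

lemma stepRoot_root (i : N) (l : List N) (a : A) : G.stepRoot i l a ∈ G.root a :=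
  G.wmap_symm_root (G.α_mem _ _)

lemma Jset_cons_mem [Nonempty N] (i : N) (l : List N) (a : A) (β : V) :
    β ∈ G.Jset (i :: l) a ↔ β ∈ G.pos a ∧
      ((G.wmap l a β ∈ -G.pos (G.target l a) ∧ β ≠ -G.stepRoot i l a) ∨
        β = G.stepRoot i l a) := by
  unfold GRS.Jset
  simp only [Set.mem_setOf_eq, wmap_cons, target_cons, LinearEquiv.trans_apply]
  constructor
  · rintro ⟨hβ, hneg⟩
    refine ⟨hβ, ?_⟩
    have hroot : G.wmap l a β ∈ G.root (G.target l a) := G.wmap_root hβ.1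
    rcases (G.sigma_negpos_iff hroot).1 hneg with ⟨h1, h2⟩ | h1
    · left
      refine ⟨h1, fun heq => h2 ?_⟩
      rw [heq]
      rw [map_neg]
      unfold GRS.stepRoot
      rw [LinearEquiv.apply_symm_apply]
    · right
      have : (G.wmap l a).symm (G.wmap l a β) = (G.wmap l a).symm (G.α i (G.target l a)) :=
        congrArg _ h1
      rwa [LinearEquiv.symm_apply_apply] at this
  · rintro ⟨hβ, hcase⟩
    refine ⟨hβ, ?_⟩
    have hroot : G.wmap l a β ∈ G.root (G.target l a) := G.wmap_root hβ.1
    apply (G.sigma_negpos_iff hroot).2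
    rcases hcase with ⟨h1, h2⟩ | h1
    · left
      refine ⟨h1, fun heq => h2 ?_⟩
      have : (G.wmap l a).symm (G.wmap l a β)
          = (G.wmap l a).symm (-G.α i (G.target l a)) := congrArg _ heq
      rw [LinearEquiv.symm_apply_apply, map_neg] at this
      exact this
    · right
      rw [h1]
      unfold GRS.stepRoot
      rw [LinearEquiv.apply_symm_apply]

lemma Jset_cons_pos [Nonempty N] {i : N} {l : List N} {a : A}
    (h : G.stepRoot i l a ∈ G.pos a) :
    G.Jset (i :: l) a = insert (G.stepRoot i l a) (G.Jset l a) ∧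
      G.stepRoot i l a ∉ G.Jset l a := by
  constructor
  · ext β
    rw [G.Jset_cons_mem]
    simp only [Set.mem_insert_iff]
    constructor
    · rintro ⟨hβ, ⟨h1, _⟩ | h1⟩
      · right; exact ⟨hβ, h1⟩
      · left; exact h1
    · rintro (rfl | ⟨hβ, h1⟩)
      · exact ⟨h, Or.inr rfl⟩
      · refine ⟨hβ, Or.inl ⟨h1, fun heq => ?_⟩⟩
        rw [heq] at hβ
        exact G.pos_neg_false h hβ
  · intro hmem
    have := hmem.2
    unfold GRS.stepRoot at this
    rw [LinearEquiv.apply_symm_apply, Set.mem_neg] at this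
    exact G.pos_neg_false (G.alpha_pos _ i) (by simpa using this)

lemma Jset_cons_neg [Nonempty N] {i : N} {l : List N} {a : A}
    (h : G.stepRoot i l a ∈ -G.pos a) :
    G.Jset (i :: l) a = G.Jset l a \ {-G.stepRoot i l a} ∧
      -G.stepRoot i l a ∈ G.Jset l a := by
  have hneg : -G.stepRoot i l a ∈ G.pos a := by rwa [Set.mem_neg] at h
  have hmem : -G.stepRoot i l a ∈ G.Jset l a := by
    refine ⟨hneg, ?_⟩
    rw [map_neg]
    unfold GRS.stepRoot
    rw [LinearEquiv.apply_symm_apply, Set.mem_neg, neg_neg]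
    exact G.alpha_pos _ i
  refine ⟨?_, hmem⟩
  ext β
  rw [G.Jset_cons_mem]
  simp only [Set.mem_diff, Set.mem_singleton_iff]
  constructor
  · rintro ⟨hβ, ⟨h1, h2⟩ | h1⟩
    · exact ⟨⟨hβ, h1⟩, h2⟩
    · exfalso
      rw [h1] at hβ
      exact G.pos_neg_false hneg (by simpa using hβ)
  · rintro ⟨⟨hβ, h1⟩, h2⟩
    exact ⟨hβ, Or.inl ⟨h1, h2⟩⟩

lemma Jset_finite [Nonempty N] (l : List N) (a : A) : (G.Jset l a).Finite := by
  induction l with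
  | nil => simp
  | cons i l ih =>
    rcases G.root_pos_or_neg (G.stepRoot_root i l a) with h | h
    · rw [(G.Jset_cons_pos h).1]; exact ih.insert _
    · rw [(G.Jset_cons_neg (Set.mem_neg.mpr h)).1]
      exact ih.diff

lemma Jset_card_cons [Nonempty N] (i : N) (l : List N) (a : A) :
    (G.Jset (i :: l) a).ncard = (G.Jset l a).ncard + 1 ∨
      (G.Jset (i :: l) a).ncard + 1 = (G.Jset l a).ncard := by
  rcases G.root_pos_or_neg (G.stepRoot_root i l a) with h | h
  · left
    obtain ⟨heq, hnot⟩ := G.Jset_cons_pos h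
    rw [heq, Set.ncard_insert_of_notMem hnot (G.Jset_finite l a)]
  · right
    have h' : G.stepRoot i l a ∈ -G.pos a := Set.mem_neg.mpr h
    obtain ⟨heq, hmem⟩ := G.Jset_cons_neg h'
    rw [heq]
    rw [Set.ncard_diff_singleton_add_one hmem (G.Jset_finite l a)]

lemma Jset_card_le [Nonempty N] (l : List N) (a : A) :
    (G.Jset l a).ncard ≤ l.length := by
  induction l with
  | nil => simp
  | cons i l ih =>
    rcases G.Jset_card_cons i l a with h | h
    · simp only [List.length_cons]; omega
    · simp only [List.length_cons]; omega

/-- A word all of whose steps increase the inversion set. -/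
def AllInc (l : List N) (a : A) : Prop := (G.Jset l a).ncard = l.length

lemma allInc_suffix [Nonempty N] {x y : List N} {a : A} (h : G.AllInc (x ++ y) a) :
    G.AllInc y a := by
  unfold GRS.AllInc at *
  have hle : ∀ z : List N, (G.Jset (z ++ y) a).ncard ≤ z.length + (G.Jset y a).ncard := by
    intro z
    induction z with
    | nil => simp
    | cons i z ih =>
      rcases G.Jset_card_cons i (z ++ y) a with h' | h' <;>
        · simp only [List.cons_append] at *
          simp only [List.length_cons]
          omega
  have h1 := hle x
  have h2 := G.Jset_card_le y a
  rw [h, List.length_append] at h1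
  omega

/-- two words at `a` are equivalent if they have the same target and σ-composite -/
def Eqv (a : A) (l l' : List N) : Prop :=
  G.target l' a = G.target l a ∧ G.wmap l' a = G.wmap l a

lemma Eqv_rfl (a : A) (l : List N) : G.Eqv a l l := ⟨rfl, rfl⟩

lemma Eqv_trans {a : A} {l₁ l₂ l₃ : List N} (h1 : G.Eqv a l₁ l₂) (h2 : G.Eqv a l₂ l₃) :
    G.Eqv a l₁ l₃ := ⟨h2.1.trans h1.1, h2.2.trans h1.2⟩

lemma Eqv_cons {a : A} {l l' : List N} (i : N) (h : G.Eqv a l l') :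
    G.Eqv a (i :: l) (i :: l') := by
  obtain ⟨ht, hw⟩ := h
  constructor
  · rw [target_cons, target_cons, ht]
  · rw [wmap_cons, wmap_cons, ht, hw]

lemma Eqv_append_left {a : A} {t t' : List N} (w : List N) (h : G.Eqv a t t') :
    G.Eqv a (w ++ t) (w ++ t') := by
  obtain ⟨ht, hw⟩ := h
  constructor
  · rw [G.target_append, G.target_append, ht]
  · rw [G.wmap_append, G.wmap_append, ht, hw]

lemma Eqv_append_right {a : A} {w w' : List N} (t : List N)
    (h : G.Eqv (G.target t a) w w') : G.Eqv a (w ++ t) (w' ++ t) := by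
  obtain ⟨ht, hw⟩ := h
  constructor
  · rw [G.target_append, G.target_append, ht]
  · rw [G.wmap_append, G.wmap_append, hw]

lemma Eqv_cancel (a : A) (i : N) (t : List N) : G.Eqv a (i :: i :: t) t := by
  constructor
  · simp [G.act_invol]
  · simp only [wmap_cons, target_cons]
    apply LinearEquiv.toLinearMap_injective
    apply LinearMap.ext
    intro v
    simp only [LinearEquiv.coe_coe, LinearEquiv.trans_apply]
    exact (G.ax6 _ _ _).symm

lemma Eqv_length_ge [Nonempty N] {a : A} {l l' : List N} (hinc : G.AllInc l a)
    (h : G.Eqv a l l') : l.length ≤ l'.length := by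
  have : G.Jset l' a = G.Jset l a := G.Jset_congr h.1 h.2
  have h2 := G.Jset_card_le l' a
  rw [this] at h2
  unfold GRS.AllInc at hinc
  rw [← hinc]
  exact h2

lemma AllInc_of_eqv [Nonempty N] {a : A} {l l' : List N} (hinc : G.AllInc l a)
    (h : G.Eqv a l l') (hlen : l'.length ≤ l.length) : G.AllInc l' a := by
  have heq : G.Jset l' a = G.Jset l a := G.Jset_congr h.1 h.2
  have hge := G.Eqv_length_ge hinc h
  have hll : l'.length = l.length := le_antisymm hlen hge
  unfold GRS.AllInc at *
  rw [heq, hinc, hll]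

/-- if a word is not all-increasing, some (shortest) suffix step decreases -/
lemma exists_decrease [Nonempty N] {l : List N} {a : A} (h : ¬ G.AllInc l a) :
    ∃ pre i t, l = pre ++ i :: t ∧ G.AllInc t a ∧ G.stepRoot i t a ∈ -G.pos a := by
  induction l with
  | nil => exact absurd (by simp [GRS.AllInc]) h
  | cons i l ih =>
    by_cases hl : G.AllInc l a
    · refine ⟨[], i, l, by simp, hl, ?_⟩
      rcases G.root_pos_or_neg (G.stepRoot_root i l a) with hp | hp
      · exfalso
        apply h
        obtain ⟨heq, hnot⟩ := G.Jset_cons_pos hp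
        unfold GRS.AllInc at *
        rw [heq, Set.ncard_insert_of_notMem hnot (G.Jset_finite l a), hl]
        simp
      · exact Set.mem_neg.mpr hp
    · obtain ⟨pre, i', t, heq, ht, hneg⟩ := ih hl
      exact ⟨i :: pre, i', t, by rw [heq]; rfl, ht, hneg⟩

end GRS
/-- alternating word of length `r` whose rightmost letter is `x` (prepending alternately) -/
def altC (x y : N) : ℕ → List N
  | 0 => []
  | r + 1 => (if r % 2 = 0 then x else y) :: altC x y r

/-- the letter prepended at step `r` of `altC x y` -/
def altP (x y : N) (r : ℕ) : N := if r % 2 = 0 then x else y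

lemma altC_succ (x y : N) (r : ℕ) : altC x y (r + 1) = altP x y r :: altC x y r := rfl

@[simp] lemma altC_length (x y : N) (r : ℕ) : (altC x y r).length = r := by
  induction r with
  | zero => rfl
  | succ r ih => simp [altC_succ, ih]

lemma altP_succ (x y : N) (r : ℕ) : altP x y (r + 1) = altP y x r := by
  unfold altP
  rcases Nat.mod_two_eq_zero_or_one r with h | h <;> simp [Nat.add_mod, h]

lemma altP_succ_succ (x y : N) (r : ℕ) : altP x y (r + 2) = altP x y r := by
  rw [altP_succ, altP_succ]

lemma altP_ne (x y : N) (hxy : x ≠ y) (r : ℕ) : altP x y (r + 1) ≠ altP x y r := by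
  unfold altP
  rcases Nat.mod_two_eq_zero_or_one r with h | h <;>
    simp [Nat.add_mod, h, hxy, hxy.symm]

lemma altC_append (x y : N) (r : ℕ) : altC x y r ++ [y] = altC y x (r + 1) := by
  induction r with
  | zero => rfl
  | succ r ih =>
    rw [altC_succ, List.cons_append, ih, altC_succ y x (r + 1), altP_succ y x r]

lemma altC_suffix (x y : N) {r m : ℕ} (h : r ≤ m) :
    ∃ pre, altC x y m = pre ++ altC x y r := by
  induction m with
  | zero =>
    have : r = 0 := Nat.le_zero.mp h
    exact ⟨[], by simp [this]⟩
  | succ m ih =>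
    rcases Nat.lt_or_ge r (m + 1) with h' | h'
    · obtain ⟨pre, hpre⟩ := ih (Nat.lt_succ_iff.mp h')
      exact ⟨altP x y m :: pre, by rw [altC_succ, hpre]; rfl⟩
    · have : r = m + 1 := le_antisymm h h'
      exact ⟨[], by simp [this]⟩

lemma altC_reverse (x y : N) (m : ℕ) :
    (altC x y m).reverse = if m % 2 = 0 then altC y x m else altC x y m := by
  induction m with
  | zero => rfl
  | succ m ih =>
    rw [altC_succ, List.reverse_cons, ih]
    rcases Nat.mod_two_eq_zero_or_one m with h | h
    · rw [if_pos h, if_neg (by omega)]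
      have hp : altP x y m = x := by unfold altP; rw [if_pos h]
      rw [hp, altC_append y x m, altC_succ x y m, hp]
    · rw [if_neg (by omega), if_pos (by omega)]
      have hp : altP x y m = y := by unfold altP; rw [if_neg (by omega)]
      rw [hp, altC_append x y m, altC_succ y x m]

/-- a list using only the two letters `x`, `y` -/
def TwoL (x y : N) (l : List N) : Prop := ∀ z ∈ l, z = x ∨ z = y

lemma altC_twoL (x y : N) (r : ℕ) : TwoL x y (altC x y r) := by
  induction r with
  | zero => intro z hz; rw [show altC x y 0 = [] from rfl] at hz; simp at hz
  | succ r ih =>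
    intro z hz
    rw [altC_succ] at hz
    rcases List.mem_cons.mp hz with h | h
    · unfold altP at h
      rcases Nat.mod_two_eq_zero_or_one r with h' | h'
      · rw [if_pos h'] at h; exact Or.inl h
      · rw [if_neg (by omega)] at h; exact Or.inr h
    · exact ih z h

lemma TwoL_reverse {x y : N} {l : List N} (h : TwoL x y l) : TwoL x y l.reverse :=
  fun z hz => h z (List.mem_reverse.mp hz)

lemma TwoL_swap {x y : N} {l : List N} (h : TwoL x y l) : TwoL y x l :=
  fun z hz => (h z hz).symm

namespace GRS

open scoped Classical

variable (G : GRS N A)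

local notation "V" => (N →₀ ℝ)

/-- membership in the plane spanned by `α x, α y` at `c` -/
def InPl (x y : N) (c : A) (β : V) : Prop :=
  ∀ n, n ≠ x → n ≠ y → (G.bas c).repr β n = 0

lemma InPl_alpha_left (x y : N) (c : A) : G.InPl x y c (G.α x c) := by
  intro n hnx _
  rw [G.repr_alpha, if_neg (fun h => hnx h.symm)]

lemma InPl_alpha_right (x y : N) (c : A) : G.InPl x y c (G.α y c) := by
  intro n _ hny
  rw [G.repr_alpha, if_neg (fun h => hny h.symm)]

lemma InPl_add {x y : N} {c : A} {β γ : V} (hβ : G.InPl x y c β) (hγ : G.InPl x y c γ) :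
    G.InPl x y c (β + γ) := by
  intro n h1 h2
  rw [map_add]
  simp only [Finsupp.coe_add, Pi.add_apply]
  rw [hβ n h1 h2, hγ n h1 h2, add_zero]

lemma InPl_smul {x y : N} {c : A} {β : V} (hβ : G.InPl x y c β) (t : ℝ) :
    G.InPl x y c (t • β) := by
  intro n h1 h2
  rw [map_smul]
  simp only [Finsupp.coe_smul, Pi.smul_apply, smul_eq_mul]
  rw [hβ n h1 h2, mul_zero]

lemma InPl_neg {x y : N} {c : A} {β : V} (hβ : G.InPl x y c β) : G.InPl x y c (-β) := by
  intro n h1 h2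
  rw [map_neg]
  simp only [Finsupp.coe_neg, Pi.neg_apply]
  rw [hβ n h1 h2, neg_zero]

lemma InPl_sub {x y : N} {c : A} {β γ : V} (hβ : G.InPl x y c β) (hγ : G.InPl x y c γ) :
    G.InPl x y c (β - γ) := by
  rw [sub_eq_add_neg]
  exact G.InPl_add hβ (G.InPl_neg hγ)

lemma InPl_swap {x y : N} {c : A} {β : V} (hβ : G.InPl x y c β) : G.InPl y x c β :=
  fun n h1 h2 => hβ n h2 h1

/-- equality test inside the plane via the two coordinates -/
lemma InPl_ext {x y : N} (hxy : x ≠ y) {c : A} {β γ : V}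
    (hβ : G.InPl x y c β) (hγ : G.InPl x y c γ)
    (hx : (G.bas c).repr β x = (G.bas c).repr γ x)
    (hy : (G.bas c).repr β y = (G.bas c).repr γ y) : β = γ := by
  apply G.repr_ext
  intro m
  by_cases hmx : m = x
  · subst hmx; exact hx
  · by_cases hmy : m = y
    · subst hmy; exact hy
    · rw [hβ m hmx hmy, hγ m hmx hmy]

lemma InPl_decomp {x y : N} (hxy : x ≠ y) {c : A} {β : V} (hβ : G.InPl x y c β) :
    β = ((G.bas c).repr β x) • G.α x c + ((G.bas c).repr β y) • G.α y c :=
  G.repr_decomp2 hxy hβ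

/-- a two-letter word preserves the plane -/
lemma wmap_inPl {x y : N} {l : List N} {c : A} (hl : TwoL x y l) {β : V}
    (hβ : G.InPl x y c β) : G.InPl x y (G.target l c) (G.wmap l c β) := by
  induction l with
  | nil => simpa using hβ
  | cons i l ih =>
    have hl' : TwoL x y l := fun z hz => hl z (List.mem_cons_of_mem i hz)
    have hmem := ih hl'
    intro n h1 h2
    simp only [wmap_cons, target_cons, LinearEquiv.trans_apply]
    have hni : n ≠ i := by
      rcases hl i (List.mem_cons_self) with h | h <;> rw [h] <;> assumption
    rw [G.coord_sigma hni]
    exact hmem n h1 h2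

lemma wmap_symm_inPl {x y : N} {l : List N} {c : A} (hl : TwoL x y l) {β : V}
    (hβ : G.InPl x y (G.target l c) β) : G.InPl x y c ((G.wmap l c).symm β) := by
  have h := G.wmap_inPl (TwoL_reverse hl) (c := G.target l c) (β := β) hβ
  rw [(G.wmap_reverse l c).1, (G.wmap_reverse l c).2] at h
  exact h

/-- the chain of roots attached to the alternating word -/
noncomputable def eta (x y : N) (c : A) (r : ℕ) : V :=
  G.stepRoot (altP x y r) (altC x y r) c

lemma eta_root (x y : N) (c : A) (r : ℕ) : G.eta x y c r ∈ G.root c :=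
  G.stepRoot_root _ _ _

lemma eta_zero (x y : N) (c : A) : G.eta x y c 0 = G.α x c := by
  unfold GRS.eta GRS.stepRoot altP altC
  simp

lemma eta_plane (x y : N) (c : A) (r : ℕ) : G.InPl x y c (G.eta x y c r) := by
  unfold GRS.eta GRS.stepRoot
  apply G.wmap_symm_inPl (altC_twoL x y r)
  have hp : altP x y r = x ∨ altP x y r = y := by
    unfold altP
    rcases Nat.mod_two_eq_zero_or_one r with h | h <;> simp [h]
  rcases hp with h | h <;> rw [h]
  · exact G.InPl_alpha_left x y _
  · exact G.InPl_alpha_right x y _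

lemma eta_apply (x y : N) (c : A) (r : ℕ) :
    G.wmap (altC x y r) c (G.eta x y c r)
      = G.α (altP x y r) (G.target (altC x y r) c) := by
  unfold GRS.eta GRS.stepRoot
  rw [LinearEquiv.apply_symm_apply]

lemma eta_apply_succ (x y : N) (c : A) (r : ℕ) :
    G.wmap (altC x y (r + 1)) c (G.eta x y c r)
      = -G.α (altP x y r) (G.target (altC x y (r + 1)) c) := by
  rw [altC_succ]
  simp only [wmap_cons, target_cons, LinearEquiv.trans_apply]
  rw [G.eta_apply, G.ax5_diag]

lemma eta_one (x y : N) (hxy : x ≠ y) (c : A) :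
    ∃ m : ℕ, G.eta x y c 1 = G.α y c + (m : ℝ) • G.α x c := by
  have h1 : altC x y 1 = [x] := rfl
  have h2 : altP x y 1 = y := by unfold altP; norm_num
  unfold GRS.eta GRS.stepRoot
  rw [h1, h2]
  have hw : G.wmap [x] c = (G.σ x c : V ≃ₗ[ℝ] V) := by
    simp
  have htg : G.target [x] c = G.act x c := rfl
  rw [hw, htg, G.sigma_symm]
  obtain ⟨m, hm⟩ := G.ax5_off x (G.act x c) y (Ne.symm hxy)
  rw [hm]
  rw [G.act_invol]
  exact ⟨m, rfl⟩

lemma eta_rec (x y : N) (hxy : x ≠ y) (c : A) (r : ℕ) :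
    ∃ m : ℕ, G.eta x y c (r + 2)
      = (m : ℝ) • G.eta x y c (r + 1) - G.eta x y c r := by
  have hne : altP x y (r + 2) ≠ altP x y (r + 1) := by
    rw [altP_succ_succ]
    intro h
    exact altP_ne x y hxy r h.symm
  obtain ⟨m, hm⟩ := G.ax5_off (altP x y (r + 1))
    (G.act (altP x y (r + 1)) (G.target (altC x y (r + 1)) c)) (altP x y (r + 2)) hne
  refine ⟨m, ?_⟩
  have e1 : G.eta x y c (r + 2)
      = (G.wmap (altC x y (r + 1)) c).symm
          ((G.σ (altP x y (r + 1)) (G.target (altC x y (r + 1)) c)).symm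
            (G.α (altP x y (r + 2)) (G.target (altC x y (r + 2)) c))) := by
    unfold GRS.eta GRS.stepRoot
    rw [altC_succ (r := r + 1)]
    rfl
  rw [e1, G.sigma_symm]
  have e2 : G.target (altC x y (r + 2)) c
      = G.act (altP x y (r + 1)) (G.target (altC x y (r + 1)) c) := by
    rw [altC_succ (r := r + 1)]; rfl
  rw [e2, hm, G.act_invol]
  rw [map_add, map_smul]
  have e3 : (G.wmap (altC x y (r + 1)) c).symm
      (G.α (altP x y (r + 1)) (G.target (altC x y (r + 1)) c)) = G.eta x y c (r + 1) := rfl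
  have e4 : (G.wmap (altC x y (r + 1)) c).symm
      (G.α (altP x y (r + 2)) (G.target (altC x y (r + 1)) c)) = -G.eta x y c r := by
    have := G.eta_apply_succ x y c r
    rw [altP_succ_succ]
    have h' : G.α (altP x y r) (G.target (altC x y (r + 1)) c)
        = -(G.wmap (altC x y (r + 1)) c (G.eta x y c r)) := by rw [this, neg_neg]
    rw [h', map_neg, LinearEquiv.symm_apply_apply]
  rw [e3, e4]
  ring_nf
  abel

/-- a determinant form on the plane at `c` -/
noncomputable def Dz (x y : N) (c : A) (β γ : V) : ℝ :=
  (G.bas c).repr β x * (G.bas c).repr γ y - (G.bas c).repr β y * (G.bas c).repr γ x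

lemma Dz_self (x y : N) (c : A) (β : V) : G.Dz x y c β β = 0 := by
  unfold GRS.Dz; ring

lemma Dz_skew (x y : N) (c : A) (β γ : V) : G.Dz x y c β γ = -G.Dz x y c γ β := by
  unfold GRS.Dz; ring

lemma Dz_neg_left (x y : N) (c : A) (β γ : V) : G.Dz x y c (-β) γ = -G.Dz x y c β γ := by
  unfold GRS.Dz
  rw [map_neg]
  simp only [Finsupp.coe_neg, Pi.neg_apply]
  ring

lemma Dz_sub_right (x y : N) (c : A) (β γ δ : V) :
    G.Dz x y c β (γ - δ) = G.Dz x y c β γ - G.Dz x y c β δ := by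
  unfold GRS.Dz
  rw [map_sub]
  simp only [Finsupp.coe_sub, Pi.sub_apply]
  ring

lemma Dz_smul_right (x y : N) (c : A) (t : ℝ) (β γ : V) :
    G.Dz x y c β (t • γ) = t * G.Dz x y c β γ := by
  unfold GRS.Dz
  rw [map_smul]
  simp only [Finsupp.coe_smul, Pi.smul_apply, smul_eq_mul]
  ring

lemma Dz_add_right (x y : N) (c : A) (β γ δ : V) :
    G.Dz x y c β (γ + δ) = G.Dz x y c β γ + G.Dz x y c β δ := by
  unfold GRS.Dz
  rw [map_add]
  simp only [Finsupp.coe_add, Pi.add_apply]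
  ring

lemma Dz_alpha (x y : N) (hxy : x ≠ y) (c : A) :
    G.Dz x y c (G.α x c) (G.α y c) = 1 := by
  unfold GRS.Dz
  rw [G.repr_alpha, G.repr_alpha, G.repr_alpha, G.repr_alpha]
  rw [if_pos rfl, if_pos rfl, if_neg hxy, if_neg (Ne.symm hxy)]
  ring

lemma Dz_eta (x y : N) (hxy : x ≠ y) (c : A) (r : ℕ) :
    G.Dz x y c (G.eta x y c r) (G.eta x y c (r + 1)) = 1 := by
  induction r with
  | zero =>
    obtain ⟨m, hm⟩ := G.eta_one x y hxy c
    rw [G.eta_zero, hm, G.Dz_add_right, G.Dz_smul_right, G.Dz_alpha x y hxy, G.Dz_self]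
    ring
  | succ r ih =>
    obtain ⟨m, hm⟩ := G.eta_rec x y hxy c r
    rw [hm, G.Dz_sub_right, G.Dz_smul_right, G.Dz_self]
    rw [G.Dz_skew]
    rw [ih]
    ring

/-- the plane root cone at `c` -/
def Pset (x y : N) (c : A) : Set V := {β | β ∈ G.pos c ∧ G.InPl x y c β}

lemma Pset_swap (x y : N) (c : A) : G.Pset x y c = G.Pset y x c := by
  ext β
  exact ⟨fun h => ⟨h.1, G.InPl_swap h.2⟩, fun h => ⟨h.1, G.InPl_swap h.2⟩⟩

lemma Pset_eq_ax7set [Nonempty N] (x y : N) (hxy : x ≠ y) (c : A) :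
    G.Pset x y c = G.root c ∩ {β | ∃ p q : ℕ, β = (p : ℝ) • G.α x c + (q : ℝ) • G.α y c} := by
  ext β
  constructor
  · rintro ⟨hpos, hpl⟩
    refine ⟨hpos.1, ?_⟩
    obtain ⟨p, hp⟩ := G.nspan_coords hpos.2 x
    obtain ⟨q, hq⟩ := G.nspan_coords hpos.2 y
    exact ⟨p, q, by rw [← hp, ← hq]; exact G.InPl_decomp hxy hpl⟩
  · rintro ⟨hroot, p, q, hpq⟩
    have hco : ∀ n, (G.bas c).repr β n
        = (p : ℝ) * (if x = n then 1 else 0) + (q : ℝ) * (if y = n then 1 else 0) := by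
      intro n
      rw [hpq, map_add, map_smul, map_smul]
      simp only [Finsupp.coe_add, Finsupp.coe_smul, Pi.add_apply, Pi.smul_apply, smul_eq_mul]
      rw [G.repr_alpha, G.repr_alpha]
    have hpl : G.InPl x y c β := by
      intro n h1 h2
      rw [hco n, if_neg (fun h => h1 h.symm), if_neg (fun h => h2 h.symm)]
      ring
    refine ⟨?_, hpl⟩
    rcases Nat.eq_zero_or_pos p with hp0 | hp0
    · rcases Nat.eq_zero_or_pos q with hq0 | hq0
      · exfalso
        apply G.zero_not_root c
        have : β = 0 := by rw [hpq, hp0, hq0]; simp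
        rwa [this] at hroot
      · apply G.root_pos_of_coord_pos hroot (m := y)
        rw [hco y, if_pos rfl, if_neg hxy]
        simp only [mul_zero, mul_one, zero_add]
        exact_mod_cast hq0
    · apply G.root_pos_of_coord_pos hroot (m := x)
      rw [hco x, if_pos rfl, if_neg (Ne.symm hxy)]
      simp only [mul_zero, mul_one, add_zero]
      exact_mod_cast hp0

lemma root_not_mixed [Nonempty N] {c : A} {β : V} (h : β ∈ G.root c) {s t : N}
    (hs : (G.bas c).repr β s < 0) (ht : 0 < (G.bas c).repr β t) : False := by
  rcases G.root_pos_or_neg h with h' | h'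
  · exact absurd (G.pos_coords h' s) (by linarith)
  · have := G.pos_coords h' t
    rw [map_neg] at this
    simp only [Finsupp.coe_neg, Pi.neg_apply] at this
    linarith

end GRS
namespace GRS

open scoped Classical

variable (G : GRS N A)

local notation "V" => (N →₀ ℝ)

lemma ENUM_J [Nonempty N] (x y : N) (c : A) {m' : ℕ}
    (hpos : ∀ r < m', G.eta x y c r ∈ G.pos c) :
    ∀ r, r ≤ m' → G.Jset (altC x y r) c = {β | ∃ s, s < r ∧ β = G.eta x y c s}
      ∧ (G.Jset (altC x y r) c).ncard = r := by
  intro r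
  induction r with
  | zero =>
    intro _
    constructor
    · rw [show altC x y 0 = [] from rfl, G.Jset_nil]
      ext β
      simp
    · rw [show altC x y 0 = [] from rfl, G.Jset_nil]
      simp
  | succ r ih =>
    intro hr
    obtain ⟨hset, hcard⟩ := ih (by omega)
    have hstep : G.stepRoot (altP x y r) (altC x y r) c = G.eta x y c r := rfl
    have hpr : G.stepRoot (altP x y r) (altC x y r) c ∈ G.pos c := by
      rw [hstep]; exact hpos r (by omega)
    obtain ⟨hins, hnot⟩ := G.Jset_cons_pos hpr
    rw [altC_succ]
    constructor
    · rw [hins, hstep, hset]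
      ext β
      simp only [Set.mem_insert_iff, Set.mem_setOf_eq]
      constructor
      · rintro (rfl | ⟨s, hs, rfl⟩)
        · exact ⟨r, by omega, rfl⟩
        · exact ⟨s, by omega, rfl⟩
      · rintro ⟨s, hs, rfl⟩
        rcases Nat.lt_or_ge s r with h' | h'
        · exact Or.inr ⟨s, h', rfl⟩
        · have : s = r := by omega
          subst this
          exact Or.inl rfl
    · rw [hins, Set.ncard_insert_of_notMem hnot (G.Jset_finite _ _), hcard]

lemma eta_mem_Pset [Nonempty N] {x y : N} {c : A} {r : ℕ}
    (h : G.eta x y c r ∈ G.pos c) : G.eta x y c r ∈ G.Pset x y c :=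
  ⟨h, G.eta_plane x y c r⟩

/-- Cramer decomposition in the plane -/
lemma cramer [Nonempty N] {x y : N} (hxy : x ≠ y) {c : A} {β γ δ : V}
    (hβ : G.InPl x y c β) (hγ : G.InPl x y c γ) (hδ : G.InPl x y c δ)
    (hD : G.Dz x y c γ δ = 1) :
    β = (G.Dz x y c β δ) • γ + (G.Dz x y c γ β) • δ := by
  have hrhs : G.InPl x y c ((G.Dz x y c β δ) • γ + (G.Dz x y c γ β) • δ) :=
    G.InPl_add (G.InPl_smul hγ _) (G.InPl_smul hδ _)
  apply G.InPl_ext hxy hβ hrhs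
  · rw [map_add, map_smul, map_smul]
    simp only [Finsupp.coe_add, Finsupp.coe_smul, Pi.add_apply, Pi.smul_apply, smul_eq_mul]
    unfold GRS.Dz at hD ⊢
    linear_combination (-((G.bas c).repr β x)) * hD
  · rw [map_add, map_smul, map_smul]
    simp only [Finsupp.coe_add, Finsupp.coe_smul, Pi.add_apply, Pi.smul_apply, smul_eq_mul]
    unfold GRS.Dz at hD ⊢
    linear_combination (-((G.bas c).repr β y)) * hD

/-- main rank-two enumeration: if the chain is positive until `m` and negative at `m`,
it enumerates the plane cone -/
lemma ENUM [Nonempty N] {x y : N} (hxy : x ≠ y) {c : A} {m : ℕ}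
    (hpos : ∀ r < m, G.eta x y c r ∈ G.pos c) (hneg : G.eta x y c m ∈ -G.pos c) :
    G.Pset x y c = {β | ∃ s, s < m ∧ β = G.eta x y c s} ∧
      (G.Pset x y c).ncard = m ∧ 2 ≤ m := by
  obtain ⟨hJset, hJcard⟩ := G.ENUM_J x y c hpos m le_rfl
  -- 2 ≤ m
  have hm2 : 2 ≤ m := by
    by_contra hlt
    interval_cases m
    · rw [G.eta_zero] at hneg
      exact G.pos_neg_false (G.alpha_pos c x) (Set.mem_neg.mp hneg)
    · obtain ⟨k, hk⟩ := G.eta_one x y hxy c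
      have hco : (G.bas c).repr (G.eta x y c 1) y = 1 := by
        rw [hk, map_add, map_smul]
        simp only [Finsupp.coe_add, Finsupp.coe_smul, Pi.add_apply, Pi.smul_apply,
          smul_eq_mul]
        rw [G.repr_alpha, G.repr_alpha, if_pos rfl, if_neg hxy]
        ring
      have : G.eta x y c 1 ∈ G.pos c :=
        G.root_pos_of_coord_pos (G.eta_root x y c 1) (by rw [hco]; norm_num)
      exact G.pos_neg_false this (Set.mem_neg.mp hneg)
  -- the index q with η q = -η m
  have hqex : -G.eta x y c m ∈ G.Jset (altC x y m) c := by
    constructor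
    · exact Set.mem_neg.mp hneg
    · rw [map_neg, G.eta_apply, Set.mem_neg, neg_neg]
      exact G.alpha_pos _ _
  rw [hJset] at hqex
  obtain ⟨q, hqm, hq⟩ := hqex
  -- chain ⊆ Pset
  have hsub : {β | ∃ s, s < m ∧ β = G.eta x y c s} ⊆ G.Pset x y c := by
    rintro β ⟨s, hs, rfl⟩
    exact G.eta_mem_Pset (hpos s hs)
  -- Pset ⊆ chain
  have hsub2 : G.Pset x y c ⊆ {β | ∃ s, s < m ∧ β = G.eta x y c s} := by
    intro ζ hζ
    by_contra hnot
    simp only [Set.mem_setOf_eq, not_exists, not_and] at hnot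
    have claim : ∀ r, r ≤ m → 0 < G.Dz x y c (G.eta x y c r) ζ := by
      intro r
      induction r with
      | zero =>
        intro _
        have h0 : G.Dz x y c (G.eta x y c 0) ζ = (G.bas c).repr ζ y := by
          rw [G.eta_zero]
          unfold GRS.Dz
          rw [G.repr_alpha, G.repr_alpha, if_pos rfl, if_neg hxy]
          ring
        rw [h0]
        rcases lt_or_eq_of_le (G.pos_coords hζ.1 y) with h | h
        · exact h
        · exfalso
          have hdec : ζ = ((G.bas c).repr ζ x) • G.α x c := by
            apply G.repr_decomp1
            intro n hn
            by_cases hny : n = y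
            · subst hny; exact h.symm
            · exact hζ.2 n hn hny
          have : ζ ∈ (Set.range fun t : ℝ => t • G.α x c) ∩ G.root c :=
            ⟨⟨_, hdec.symm⟩, hζ.1.1⟩
          rw [G.ax4] at this
          rcases this with h' | h'
          · apply hnot 0 (by omega)
            rw [h', G.eta_zero]
          · apply G.pos_neg_false (G.alpha_pos c x)
            rw [← h']
            simpa using hζ.1
      | succ r ihr =>
        intro hrm
        have hr : 0 < G.Dz x y c (G.eta x y c r) ζ := ihr (by omega)
        have hDr : G.Dz x y c (G.eta x y c r) (G.eta x y c (r + 1)) = 1 :=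
          G.Dz_eta x y hxy c r
        have hcram : ζ = (G.Dz x y c ζ (G.eta x y c (r + 1))) • G.eta x y c r
            + (G.Dz x y c (G.eta x y c r) ζ) • G.eta x y c (r + 1) :=
          G.cramer hxy hζ.2 (G.eta_plane x y c r) (G.eta_plane x y c (r + 1)) hDr
        -- no root strictly between consecutive chain elements
        have hle : G.Dz x y c ζ (G.eta x y c (r + 1)) ≤ 0 := by
          by_contra hgt
          push_neg at hgt
          set aa := G.Dz x y c ζ (G.eta x y c (r + 1)) with haa
          set bb := G.Dz x y c (G.eta x y c r) ζ with hbb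
          have himg : G.wmap (altC x y (r + 1)) c ζ
              = aa • (-G.α (altP x y r) (G.target (altC x y (r + 1)) c))
                + bb • G.α (altP x y (r + 1)) (G.target (altC x y (r + 1)) c) := by
            conv_lhs => rw [hcram]
            rw [map_add, map_smul, map_smul, G.eta_apply_succ, G.eta_apply]
          have hroot : G.wmap (altC x y (r + 1)) c ζ
              ∈ G.root (G.target (altC x y (r + 1)) c) := G.wmap_root hζ.1.1
          have hpq : altP x y (r + 1) ≠ altP x y r := altP_ne x y hxy r
          apply G.root_not_mixed hroot (s := altP x y r) (t := altP x y (r + 1))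
          · rw [himg, map_add, map_smul, map_smul, map_neg]
            simp only [Finsupp.coe_add, Finsupp.coe_smul, Finsupp.coe_neg, Pi.add_apply,
              Pi.smul_apply, Pi.neg_apply, smul_eq_mul]
            rw [G.repr_alpha, G.repr_alpha, if_pos rfl, if_neg hpq]
            simp only [mul_one, mul_zero, add_zero, mul_neg]
            linarith
          · rw [himg, map_add, map_smul, map_smul, map_neg]
            simp only [Finsupp.coe_add, Finsupp.coe_smul, Finsupp.coe_neg, Pi.add_apply,
              Pi.smul_apply, Pi.neg_apply, smul_eq_mul]
            rw [G.repr_alpha, G.repr_alpha, if_neg (fun h => hpq h.symm), if_pos rfl]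
            simp only [mul_one, mul_zero, neg_zero, zero_add]
            linarith
        rcases lt_or_eq_of_le (by rw [G.Dz_skew] at hle; linarith :
            (0:ℝ) ≤ G.Dz x y c (G.eta x y c (r + 1)) ζ) with h | h
        · exact h
        · exfalso
          -- ζ is a multiple of η (r+1)
          have haa : G.Dz x y c ζ (G.eta x y c (r + 1)) = 0 := by
            rw [G.Dz_skew]; rw [← h]; ring
          have hmul : ζ = (G.Dz x y c (G.eta x y c r) ζ) • G.eta x y c (r + 1) := by
            conv_lhs => rw [hcram]
            rw [haa, zero_smul, zero_add]
          have himg : G.wmap (altC x y (r + 1)) c ζ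
              = (G.Dz x y c (G.eta x y c r) ζ)
                • G.α (altP x y (r + 1)) (G.target (altC x y (r + 1)) c) := by
            conv_lhs => rw [hmul]
            rw [map_smul, G.eta_apply]
          have hax : G.wmap (altC x y (r + 1)) c ζ
              ∈ (Set.range fun t : ℝ =>
                t • G.α (altP x y (r + 1)) (G.target (altC x y (r + 1)) c))
                ∩ G.root (G.target (altC x y (r + 1)) c) :=
            ⟨⟨_, himg.symm⟩, G.wmap_root hζ.1.1⟩
          rw [G.ax4] at hax
          rcases hax with h' | h'
          · -- ζ = η (r+1)
            have : ζ = G.eta x y c (r + 1) := by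
              have := congrArg (G.wmap (altC x y (r + 1)) c).symm h'
              rw [LinearEquiv.symm_apply_apply] at this
              rw [this]; rfl
            rcases Nat.lt_or_ge (r + 1) m with hc | hc
            · exact hnot (r + 1) hc this
            · have hrm1 : r + 1 = m := by omega
              rw [hrm1] at this
              rw [this] at hζ
              exact G.pos_neg_false hζ.1 (Set.mem_neg.mp hneg)
          · -- ζ = -η (r+1)
            have hζeq : ζ = -G.eta x y c (r + 1) := by
              have := congrArg (G.wmap (altC x y (r + 1)) c).symm h'
              rw [LinearEquiv.symm_apply_apply, map_neg] at this
              rw [this]; rfl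
            rcases Nat.lt_or_ge (r + 1) m with hc | hc
            · rw [hζeq] at hζ
              exact G.pos_neg_false (hpos (r + 1) hc) (by simpa using hζ.1)
            · have hrm1 : r + 1 = m := by omega
              apply hnot q hqm
              rw [hζeq, hrm1, ← hq]
    have hqpos := claim q (by omega)
    have hmpos := claim m le_rfl
    have : G.eta x y c m = -G.eta x y c q := by rw [← hq, neg_neg]
    rw [this, G.Dz_neg_left] at hmpos
    linarith
  have hPeq : G.Pset x y c = {β | ∃ s, s < m ∧ β = G.eta x y c s} :=
    le_antisymm hsub2 hsub
  refine ⟨hPeq, ?_, hm2⟩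
  rw [hPeq, ← hJset, hJcard]

end GRS
namespace GRS

open scoped Classical

variable (G : GRS N A)

local notation "V" => (N →₀ ℝ)

lemma chainSet_eq_image (x y : N) (c : A) (m : ℕ) :
    {β : V | ∃ s, s < m ∧ β = G.eta x y c s}
      = (fun s => G.eta x y c s) '' (Set.Iio m) := by
  ext β
  simp only [Set.mem_setOf_eq, Set.mem_image, Set.mem_Iio]
  constructor
  · rintro ⟨s, hs, rfl⟩; exact ⟨s, hs, rfl⟩
  · rintro ⟨s, hs, rfl⟩; exact ⟨s, hs, rfl⟩

lemma Pset_finite [Nonempty N] {x y : N} (hxy : x ≠ y) {c : A} {m : ℕ}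
    (hpos : ∀ r < m, G.eta x y c r ∈ G.pos c) (hneg : G.eta x y c m ∈ -G.pos c) :
    (G.Pset x y c).Finite := by
  rw [(G.ENUM hxy hpos hneg).1, G.chainSet_eq_image]
  exact (Set.finite_Iio m).image _

lemma eta_top [Nonempty N] {x y : N} (hxy : x ≠ y) {c : A} {m : ℕ}
    (hpos : ∀ r < m, G.eta x y c r ∈ G.pos c) (hneg : G.eta x y c m ∈ -G.pos c) :
    G.eta x y c (m - 1) = G.α y c := by
  obtain ⟨hPeq, hPcard, hm2⟩ := G.ENUM hxy hpos hneg
  have hymem : G.α y c ∈ G.Pset x y c := ⟨G.alpha_pos c y, G.InPl_alpha_right x y c⟩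
  rw [hPeq] at hymem
  obtain ⟨t, htm, hty⟩ := hymem
  rcases Nat.lt_or_ge (t + 1) m with h | h
  · exfalso
    have hD := G.Dz_eta x y hxy c t
    rw [← hty] at hD
    have hcomp : G.Dz x y c (G.α y c) (G.eta x y c (t + 1))
        = -((G.bas c).repr (G.eta x y c (t + 1)) x) := by
      unfold GRS.Dz
      rw [G.repr_alpha, G.repr_alpha, if_neg (Ne.symm hxy), if_pos rfl]
      ring
    rw [hcomp] at hD
    have hge := G.pos_coords (hpos (t + 1) h) x
    linarith
  · have ht : t = m - 1 := by omega
    rw [← ht]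
    exact hty.symm

lemma utop [Nonempty N] {x y : N} (hxy : x ≠ y) {c : A} {m : ℕ}
    (hpos : ∀ r < m, G.eta x y c r ∈ G.pos c) (hneg : G.eta x y c m ∈ -G.pos c) :
    G.wmap (altC x y m) c (G.α y c)
      = -G.α (altP x y (m - 1)) (G.target (altC x y m) c) := by
  have hm2 := (G.ENUM hxy hpos hneg).2.2
  have htop := G.eta_top hxy hpos hneg
  have happ := G.eta_apply_succ x y c (m - 1)
  rw [show m - 1 + 1 = m from by omega] at happ
  rw [← htop]
  exact happ

lemma Jset_reverse [Nonempty N] (l : List N) (a : A) :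
    G.Jset l.reverse (G.target l a) = (fun β => -(G.wmap l a β)) '' (G.Jset l a) := by
  obtain ⟨htr, hwr⟩ := G.wmap_reverse l a
  ext γ
  constructor
  · intro hγ
    have h1 : γ ∈ G.pos (G.target l a) := hγ.1
    have h2 := hγ.2
    rw [hwr, htr] at h2
    refine ⟨-(G.wmap l a).symm γ, ⟨?_, ?_⟩, ?_⟩
    · rw [Set.mem_neg] at h2
      exact h2
    · rw [map_neg, LinearEquiv.apply_symm_apply, Set.mem_neg, neg_neg]
      exact h1
    · simp only [map_neg, LinearEquiv.apply_symm_apply, neg_neg]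
  · rintro ⟨β, hβ, rfl⟩
    constructor
    · show -(G.wmap l a β) ∈ G.pos (G.target l a)
      exact Set.mem_neg.mp hβ.2
    · rw [hwr, htr, map_neg, LinearEquiv.symm_apply_apply, Set.mem_neg, neg_neg]
      exact hβ.1

lemma Jset_reverse_ncard [Nonempty N] (l : List N) (a : A) :
    (G.Jset l.reverse (G.target l a)).ncard = (G.Jset l a).ncard := by
  rw [G.Jset_reverse]
  apply Set.ncard_image_of_injective
  intro β γ h
  simp only [neg_inj] at h
  exact (G.wmap l a).injective h

lemma allInc_chain_pos [Nonempty N] {u v : N} {c'' : A} {r₀ : ℕ}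
    (h : G.AllInc (altC u v r₀) c'') : ∀ r, r < r₀ → G.eta u v c'' r ∈ G.pos c'' := by
  intro r hr
  obtain ⟨pre, hpre⟩ := altC_suffix u v (show r + 1 ≤ r₀ by omega)
  have hsub : G.AllInc (altC u v (r + 1)) c'' := by
    apply G.allInc_suffix (x := pre)
    rw [← hpre]
    exact h
  rcases G.root_pos_or_neg (G.eta_root u v c'' r) with hp | hp
  · exact hp
  · exfalso
    have hstep : G.stepRoot (altP u v r) (altC u v r) c'' ∈ -G.pos c'' := Set.mem_neg.mpr hp
    obtain ⟨heq, _⟩ := G.Jset_cons_neg hstep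
    unfold GRS.AllInc at hsub
    rw [altC_succ, heq] at hsub
    have h1 : (G.Jset (altC u v r) c'' \
        {-G.stepRoot (altP u v r) (altC u v r) c''}).ncard
        ≤ (G.Jset (altC u v r) c'').ncard :=
      Set.ncard_le_ncard Set.diff_subset (G.Jset_finite _ _)
    have h2 := G.Jset_card_le (altC u v r) c''
    rw [altC_length] at h2
    rw [List.length_cons, altC_length] at hsub
    omega

/-- the swapped chain is also positive until `m` and negative at `m` -/
lemma chain_swap [Nonempty N] {x y : N} (hxy : x ≠ y) {c : A} {m : ℕ}
    (hpos : ∀ r < m, G.eta x y c r ∈ G.pos c) (hneg : G.eta x y c m ∈ -G.pos c) :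
    (∀ r < m, G.eta y x c r ∈ G.pos c) ∧ G.eta y x c m ∈ -G.pos c := by
  obtain ⟨hPeq, hPcard, hm2⟩ := G.ENUM hxy hpos hneg
  have hPfin : (G.Pset x y c).Finite := G.Pset_finite hxy hpos hneg
  have key : ∀ r', r' ≤ m → (∀ r < r', G.eta y x c r ∈ G.pos c) →
      G.eta y x c r' ∈ -G.pos c → r' = m := by
    intro r' _ hp hn
    have hcard := (G.ENUM (Ne.symm hxy) hp hn).2.1
    rw [← G.Pset_swap x y c] at hcard
    omega
  have hpos' : ∀ r < m, G.eta y x c r ∈ G.pos c := by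
    intro r
    induction r using Nat.strong_induction_on with
    | _ r ih =>
      intro hrm
      rcases G.root_pos_or_neg (G.eta_root y x c r) with hp | hp
      · exact hp
      · exfalso
        have := key r (by omega) (fun s hs => ih s hs (by omega)) (Set.mem_neg.mpr hp)
        omega
  refine ⟨hpos', ?_⟩
  rcases G.root_pos_or_neg (G.eta_root y x c m) with hp | hp
  · exfalso
    obtain ⟨hJ', hJc'⟩ := G.ENUM_J y x c hpos' m le_rfl
    have hchain' : {β : V | ∃ s, s < m ∧ β = G.eta y x c s} ⊆ G.Pset y x c := by
      rintro β ⟨s, hs, rfl⟩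
      exact G.eta_mem_Pset (hpos' s hs)
    have hcardyx : (G.Pset y x c).ncard = m := by
      rw [← G.Pset_swap x y c]
      exact hPcard
    have heqP : {β : V | ∃ s, s < m ∧ β = G.eta y x c s} = G.Pset y x c :=
      Set.eq_of_subset_of_ncard_le hchain'
        (by rw [hcardyx, ← hJ', hJc'])
        (by rw [← G.Pset_swap x y c]; exact hPfin)
    have hmem : G.eta y x c m ∈ G.Pset y x c := ⟨hp, G.eta_plane y x c m⟩
    rw [← heqP, ← hJ'] at hmem
    have h2 := hmem.2
    rw [G.eta_apply, Set.mem_neg] at h2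
    exact G.pos_neg_false h2 (by rw [neg_neg]; exact G.alpha_pos _ _)
  · exact Set.mem_neg.mpr (Set.mem_neg.mp hp)

lemma urev [Nonempty N] {x y : N} (hxy : x ≠ y) {c : A} {m : ℕ}
    (hpos : ∀ r < m, G.eta x y c r ∈ G.pos c) (hneg : G.eta x y c m ∈ -G.pos c) :
    G.wmap (altC x y m) c (G.α x c)
      = -G.α (altP x y m) (G.target (altC x y m) c) := by
  have hm2 := (G.ENUM hxy hpos hneg).2.2
  obtain ⟨hJ, hJc⟩ := G.ENUM_J x y c hpos m le_rfl
  obtain ⟨htr, hwr⟩ := G.wmap_reverse (altC x y m) c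
  have hrevcard : (G.Jset (altC x y m).reverse (G.target (altC x y m) c)).ncard = m := by
    rw [G.Jset_reverse_ncard]; exact hJc
  have hut := G.utop hxy hpos hneg
  rcases Nat.mod_two_eq_zero_or_one m with hm | hm
  · -- m even : reverse = altC y x m
    have hrev : (altC x y m).reverse = altC y x m := by rw [altC_reverse, if_pos hm]
    rw [hrev] at htr hwr hrevcard
    have hAll : G.AllInc (altC y x m) (G.target (altC x y m) c) := by
      unfold GRS.AllInc
      rw [hrevcard, altC_length]
    have hcp := G.allInc_chain_pos hAll
    have hp : altP y x m = y := by unfold altP; rw [if_pos hm]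
    have hetam : G.eta y x (G.target (altC x y m) c) m
        = G.wmap (altC x y m) c (G.α y c) := by
      unfold GRS.eta GRS.stepRoot
      rw [hwr, htr, LinearEquiv.symm_symm, hp]
    have hnegm : G.eta y x (G.target (altC x y m) c) m
        ∈ -G.pos (G.target (altC x y m) c) := by
      rw [hetam, hut, Set.mem_neg, neg_neg]
      exact G.alpha_pos _ _
    have h2 := G.utop (Ne.symm hxy) hcp hnegm
    have hpm1 : altP y x (m - 1) = x := by
      unfold altP
      rw [if_neg (by omega)]
    rw [hwr, htr, hpm1] at h2
    have h3 := congrArg (G.wmap (altC x y m) c) h2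
    rw [LinearEquiv.apply_symm_apply, map_neg] at h3
    have hpm : altP x y m = x := by unfold altP; rw [if_pos hm]
    rw [hpm, h3, neg_neg]
  · -- m odd : reverse = altC x y m
    have hrev : (altC x y m).reverse = altC x y m := by
      rw [altC_reverse, if_neg (by omega)]
    rw [hrev] at htr hwr hrevcard
    have hAll : G.AllInc (altC x y m) (G.target (altC x y m) c) := by
      unfold GRS.AllInc
      rw [hrevcard, altC_length]
    have hcp := G.allInc_chain_pos hAll
    have hp : altP x y m = y := by unfold altP; rw [if_neg (by omega)]
    have hetam : G.eta x y (G.target (altC x y m) c) m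
        = G.wmap (altC x y m) c (G.α y c) := by
      unfold GRS.eta GRS.stepRoot
      rw [hwr, htr, LinearEquiv.symm_symm, hp]
    have hnegm : G.eta x y (G.target (altC x y m) c) m
        ∈ -G.pos (G.target (altC x y m) c) := by
      rw [hetam, hut, Set.mem_neg, neg_neg]
      exact G.alpha_pos _ _
    have h2 := G.utop hxy hcp hnegm
    have hpm1 : altP x y (m - 1) = x := by
      unfold altP
      rw [if_pos (by omega)]
    rw [hwr, htr, hpm1] at h2
    have h3 := congrArg (G.wmap (altC x y m) c) h2
    rw [LinearEquiv.apply_symm_apply, map_neg] at h3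
    rw [hp, h3, neg_neg]

end GRS
namespace GRS

open scoped Classical

variable (G : GRS N A)

local notation "V" => (N →₀ ℝ)

lemma altIter_iterate (x y : N) (c : A) :
    ∀ t, altIter G.act x y c t = (fun d => G.act x (G.act y d))^[t] c := by
  intro t
  induction t with
  | zero => rfl
  | succ t ih =>
    show G.act x (G.act y (altIter G.act x y c t)) = _
    rw [ih, Function.iterate_succ_apply']

lemma theta_facts [Nonempty N] {x y : N} {c : A} {m : ℕ}
    (hfin : (ThetaSet G.act x y c).Finite)
    (hdvd : (ThetaSet G.act x y c).ncard ∣ m) :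
    (fun d => G.act x (G.act y d))^[m] c = c ∧
      (fun d => G.act y (G.act x d))^[m] c = c := by
  set f : A → A := fun d => G.act x (G.act y d) with hf
  set g : A → A := fun d => G.act y (G.act x d) with hg
  have gf : ∀ d, g (f d) = d := by
    intro d; simp only [hf, hg, G.act_invol]
  have fg : ∀ d, f (g d) = d := by
    intro d; simp only [hf, hg, G.act_invol]
  have gfi : ∀ n d, g^[n] (f^[n] d) = d := by
    intro n
    induction n with
    | zero => intro d; rfl
    | succ n ih =>
      intro d
      rw [Function.iterate_succ_apply f, Function.iterate_succ_apply' g, ih (f d), gf d]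
  have hmemf : ∀ t, f^[t] c ∈ ThetaSet G.act x y c := by
    intro t
    exact ⟨t, Or.inl (G.altIter_iterate x y c t).symm⟩
  have hinj : ∀ t₁ t₂, t₁ ≤ t₂ → f^[t₁] c = f^[t₂] c → f^[t₂ - t₁] c = c := by
    intro t₁ t₂ hle heq
    have h1 : g^[t₁] (f^[t₁] c) = c := gfi t₁ c
    have h2 : f^[t₂] c = f^[t₁] (f^[t₂ - t₁] c) := by
      rw [← Function.iterate_add_apply f t₁ (t₂ - t₁) c]
      congr 1
      omega
    rw [heq, h2, gfi t₁ (f^[t₂ - t₁] c)] at h1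
    exact h1
  have hT : ∃ T, 0 < T ∧ f^[T] c = c := by
    by_contra hnone
    push_neg at hnone
    have hinj2 : Function.Injective (fun t => f^[t] c) := by
      intro t₁ t₂ h
      by_contra hne
      rcases Nat.lt_or_ge t₁ t₂ with hlt | hge
      · exact hnone (t₂ - t₁) (by omega) (hinj t₁ t₂ (by omega) h)
      · have hlt : t₂ < t₁ := by omega
        exact hnone (t₁ - t₂) (by omega) (hinj t₂ t₁ (by omega) h.symm)
    exact (Set.infinite_of_injective_forall_mem hinj2 hmemf) hfin
  set T₀ := Nat.find hT with hT₀def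
  obtain ⟨hT₀pos, hT₀⟩ := Nat.find_spec hT
  have red : ∀ k b, f^[T₀ * k + b] c = f^[b] c := by
    intro k
    induction k with
    | zero => intro b; simp
    | succ k ih =>
      intro b
      have : T₀ * (k + 1) + b = (T₀ * k + b) + T₀ := by ring
      rw [this, Function.iterate_add_apply f (T₀ * k + b) T₀ c, hT₀, ih b]
  have fmod : ∀ t, f^[t] c = f^[t % T₀] c := by
    intro t
    conv_lhs => rw [show t = T₀ * (t / T₀) + t % T₀ from (Nat.div_add_mod t T₀).symm]
    exact red (t / T₀) (t % T₀)
  have gmem : ∀ t, ∃ s, s < T₀ ∧ g^[t] c = f^[s] c := by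
    intro t
    induction t with
    | zero => exact ⟨0, hT₀pos, rfl⟩
    | succ t ih =>
      obtain ⟨s, hs, he⟩ := ih
      rw [Function.iterate_succ_apply' g, he]
      rcases Nat.eq_zero_or_pos s with hs0 | hs0
      · refine ⟨T₀ - 1, by omega, ?_⟩
        rw [hs0]
        have : f^[T₀] c = f (f^[T₀ - 1] c) := by
          rw [← Function.iterate_succ_apply' f]
          congr 1
          omega
        show g (f^[0] c) = _
        have h0 : (f^[0] c) = f^[T₀] c := hT₀.symm
        rw [h0, this, gf]
      · refine ⟨s - 1, by omega, ?_⟩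
        have : f^[s] c = f (f^[s - 1] c) := by
          rw [← Function.iterate_succ_apply' f]
          congr 1
          omega
        rw [this, gf]
  have hset : ThetaSet G.act x y c
      = ↑((Finset.range T₀).image fun s => f^[s] c) := by
    ext d
    simp only [Finset.coe_image, Finset.coe_range, Set.mem_image, Set.mem_Iio]
    constructor
    · rintro ⟨t, ht | ht⟩
      · refine ⟨t % T₀, Nat.mod_lt t hT₀pos, ?_⟩
        rw [← fmod t, ← G.altIter_iterate x y c t]
        exact ht.symm
      · have hg' : altIter G.act y x c t = g^[t] c := G.altIter_iterate y x c t
        obtain ⟨s, hs, he⟩ := gmem t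
        exact ⟨s, hs, by rw [← he, ← hg']; exact ht.symm⟩
    · rintro ⟨s, _, rfl⟩
      exact hmemf s
  have hinjOn : Set.InjOn (fun s => f^[s] c) ↑(Finset.range T₀) := by
    intro s₁ h₁ s₂ h₂ he
    simp only [Finset.coe_range, Set.mem_Iio] at h₁ h₂
    by_contra hne
    rcases Nat.lt_or_ge s₁ s₂ with hlt | hge
    · have := hinj s₁ s₂ (by omega) he
      exact Nat.find_min hT (m := s₂ - s₁) (by omega) ⟨by omega, this⟩
    · have hlt : s₂ < s₁ := by omega
      have := hinj s₂ s₁ (by omega) he.symm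
      exact Nat.find_min hT (m := s₁ - s₂) (by omega) ⟨by omega, this⟩
  have hcard : (ThetaSet G.act x y c).ncard = T₀ := by
    rw [hset, Set.ncard_coe_finset, Finset.card_image_of_injOn hinjOn, Finset.card_range]
  rw [hcard] at hdvd
  obtain ⟨k, rfl⟩ := hdvd
  have hfm : f^[T₀ * k] c = c := by
    have := red k 0
    simpa using this
  refine ⟨hfm, ?_⟩
  have := gfi (T₀ * k) c
  rw [hfm] at this
  exact this

lemma target_altC_iter (x y : N) (c : A) (s : ℕ) :
    G.target (altC x y (2 * s)) c = (fun d => G.act y (G.act x d))^[s] c ∧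
      G.target (altC x y (2 * s + 1)) c
        = G.act x ((fun d => G.act y (G.act x d))^[s] c) := by
  set g : A → A := fun d => G.act y (G.act x d) with hg
  induction s with
  | zero =>
    constructor
    · rfl
    · show G.target (altC x y 1) c = G.act x c
      rfl
  | succ s ih =>
    obtain ⟨ih1, ih2⟩ := ih
    have h1 : G.target (altC x y (2 * (s + 1))) c = g^[s + 1] c := by
      rw [show 2 * (s + 1) = (2 * s + 1) + 1 from by ring, altC_succ, target_cons, ih2]
      have hp : altP x y (2 * s + 1) = y := by
        unfold altP
        rw [if_neg (by omega)]
      rw [hp, Function.iterate_succ_apply' g]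
    refine ⟨h1, ?_⟩
    rw [show 2 * (s + 1) + 1 = (2 * (s + 1)) + 1 from rfl, altC_succ, target_cons, h1]
    have hp : altP x y (2 * (s + 1)) = x := by
      unfold altP
      rw [if_pos (by omega)]
    rw [hp]

lemma braid_target_of_periodic [Nonempty N] {x y : N} {c : A} {m : ℕ}
    (hfm : (fun d => G.act x (G.act y d))^[m] c = c)
    (hgm : (fun d => G.act y (G.act x d))^[m] c = c) :
    G.target (altC y x m) c = G.target (altC x y m) c := by
  set f : A → A := fun d => G.act x (G.act y d) with hf
  set g : A → A := fun d => G.act y (G.act x d) with hg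
  have gf : ∀ d, g (f d) = d := by
    intro d; simp only [hf, hg, G.act_invol]
  have fg : ∀ d, f (g d) = d := by
    intro d; simp only [hf, hg, G.act_invol]
  have gfi : ∀ n d, g^[n] (f^[n] d) = d := by
    intro n
    induction n with
    | zero => intro d; rfl
    | succ n ih =>
      intro d
      rw [Function.iterate_succ_apply f, Function.iterate_succ_apply' g, ih (f d), gf d]
  have fgi : ∀ n d, f^[n] (g^[n] d) = d := by
    intro n
    induction n with
    | zero => intro d; rfl
    | succ n ih =>
      intro d
      rw [Function.iterate_succ_apply g, Function.iterate_succ_apply' f, ih (g d), fg d]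
  rcases Nat.even_or_odd m with ⟨s, hs⟩ | ⟨s, hs⟩
  · subst hs
    have ht1 := (G.target_altC_iter y x c s).1
    have ht2 := (G.target_altC_iter x y c s).1
    rw [show s + s = 2 * s from by ring] at *
    rw [ht1, ht2]
    -- goal : f^[s] c = g^[s] c
    have hinj : Function.Injective (g^[s]) :=
      Function.LeftInverse.injective (g := f^[s]) (fgi s)
    apply hinj
    rw [gfi s c]
    have : g^[s] (g^[s] c) = g^[2 * s] c := by
      rw [← Function.iterate_add_apply g s s c]
      congr 1
      ring
    rw [this, hgm]
  · subst hs
    have ht1 := (G.target_altC_iter y x c s).2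
    have ht2 := (G.target_altC_iter x y c s).2
    rw [ht1, ht2]
    -- goal : act y (f^[s] c) = act x (g^[s] c)
    have hkey : g^[s + 1] c = f^[s] c := by
      have hinj : Function.Injective (f^[s + 1]) :=
        Function.LeftInverse.injective (g := g^[s + 1]) (gfi (s + 1))
      apply hinj
      rw [fgi (s + 1) c]
      have : f^[s + 1] (f^[s] c) = f^[2 * s + 1] c := by
        rw [← Function.iterate_add_apply f (s + 1) s c]
        congr 1
        ring
      rw [this, hfm]
    rw [← hkey, Function.iterate_succ_apply' g]
    show G.act y (G.act y (G.act x (g^[s] c))) = G.act x (g^[s] c)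
    rw [G.act_invol]

lemma braid_targets [Nonempty N] {x y : N} (hxy : x ≠ y) {c : A} {m : ℕ}
    (hpos : ∀ r < m, G.eta x y c r ∈ G.pos c) (hneg : G.eta x y c m ∈ -G.pos c) :
    G.target (altC y x m) c = G.target (altC x y m) c := by
  have hPfin := G.Pset_finite hxy hpos hneg
  have hPcard := (G.ENUM hxy hpos hneg).2.1
  have hfin7 : (G.root c ∩ {β : V | ∃ p q : ℕ,
      β = (p : ℝ) • G.α x c + (q : ℝ) • G.α y c}).Finite := by
    rw [← G.Pset_eq_ax7set x y hxy c]
    exact hPfin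
  obtain ⟨hθfin, hθdvd⟩ := G.ax7 c x y hxy hfin7
  have hdvd : (ThetaSet G.act x y c).ncard ∣ m := by
    rw [← G.Pset_eq_ax7set x y hxy c, hPcard] at hθdvd
    exact hθdvd
  obtain ⟨hfm, hgm⟩ := G.theta_facts hθfin hdvd
  exact G.braid_target_of_periodic hfm hgm

end GRS
namespace GRS

open scoped Classical

variable (G : GRS N A)

local notation "V" => (N →₀ ℝ)

lemma wmap_off {x y : N} {l : List N} {a : A} (hl : TwoL x y l) {n : N}
    (hnx : n ≠ x) (hny : n ≠ y) :
    ∃ π, G.InPl x y (G.target l a) π ∧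
      G.wmap l a (G.α n a) = G.α n (G.target l a) + π := by
  induction l with
  | nil =>
    refine ⟨0, fun n' h1 h2 => by simp, by simp⟩
  | cons i l ih =>
    obtain ⟨π, hπ, he⟩ := ih (fun z hz => hl z (List.mem_cons_of_mem i hz))
    have hix : i = x ∨ i = y := hl i (List.mem_cons_self)
    have hni : n ≠ i := by
      rcases hix with h | h <;> rw [h] <;> assumption
    obtain ⟨k, hk⟩ := G.ax5_off i (G.target l a) n hni
    refine ⟨(k : ℝ) • G.α i (G.act i (G.target l a)) + G.σ i (G.target l a) π, ?_, ?_⟩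
    · apply G.InPl_add
      · apply G.InPl_smul
        rcases hix with h | h <;> rw [h]
        · exact G.InPl_alpha_left x y _
        · exact G.InPl_alpha_right x y _
      · intro n' h1 h2
        have hn'i : n' ≠ i := by
          rcases hix with h | h <;> rw [h] <;> assumption
        show ((G.bas (G.act i (G.target l a))).repr ((G.σ i (G.target l a)) π)) n' = 0
        rw [G.coord_sigma hn'i]
        exact hπ n' h1 h2
    · simp only [wmap_cons, target_cons, LinearEquiv.trans_apply]
      rw [he, map_add, hk]
      abel

/-- the full braid relation -/
lemma BRAID [Nonempty N] {x y : N} (hxy : x ≠ y) {c : A} {m : ℕ}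
    (hpos : ∀ r < m, G.eta x y c r ∈ G.pos c) (hneg : G.eta x y c m ∈ -G.pos c) :
    G.Eqv c (altC x y m) (altC y x m) := by
  obtain ⟨hpos', hneg'⟩ := G.chain_swap hxy hpos hneg
  have ht : G.target (altC y x m) c = G.target (altC x y m) c :=
    G.braid_targets hxy hpos hneg
  refine ⟨ht, ?_⟩
  have hm2 := (G.ENUM hxy hpos hneg).2.2
  have hAx : G.wmap (altC x y m) c (G.α x c)
      = -G.α (altP x y m) (G.target (altC x y m) c) := G.urev hxy hpos hneg
  have hAy : G.wmap (altC x y m) c (G.α y c)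
      = -G.α (altP x y (m - 1)) (G.target (altC x y m) c) := G.utop hxy hpos hneg
  have hBy : G.wmap (altC y x m) c (G.α y c)
      = -G.α (altP y x m) (G.target (altC y x m) c) := G.urev (Ne.symm hxy) hpos' hneg'
  have hBx : G.wmap (altC y x m) c (G.α x c)
      = -G.α (altP y x (m - 1)) (G.target (altC y x m) c) := G.utop (Ne.symm hxy) hpos' hneg'
  rw [ht] at hBx hBy
  have hpe1 : altP y x m = altP x y (m - 1) := by
    unfold altP
    rcases Nat.mod_two_eq_zero_or_one m with h | h
    · rw [if_pos h, if_neg (by omega)]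
    · rw [if_neg (by omega), if_pos (by omega)]
  have hpe2 : altP y x (m - 1) = altP x y m := by
    unfold altP
    rcases Nat.mod_two_eq_zero_or_one m with h | h
    · rw [if_neg (by omega), if_pos h]
    · rw [if_pos (by omega), if_neg (by omega)]
  rw [hpe1] at hBy
  rw [hpe2] at hBx
  -- now : hAx = hBx on α x, hAy = hBy on α y
  have hagreex : G.wmap (altC x y m) c (G.α x c) = G.wmap (altC y x m) c (G.α x c) := by
    rw [hAx, hBx]
  have hagreey : G.wmap (altC x y m) c (G.α y c) = G.wmap (altC y x m) c (G.α y c) := by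
    rw [hAy, hBy]
  have hagree : ∀ n, G.wmap (altC y x m) c (G.α n c) = G.wmap (altC x y m) c (G.α n c) := by
    intro n
    by_cases hnx : n = x
    · subst hnx; exact hagreex.symm
    by_cases hny : n = y
    · subst hny; exact hagreey.symm
    -- off-plane case
    obtain ⟨πA, hπA, heA⟩ := G.wmap_off (a := c) (altC_twoL x y m) hnx hny
    obtain ⟨πB, hπB, heB⟩ := G.wmap_off (a := c) (TwoL_swap (altC_twoL y x m)) hnx hny
    rw [ht] at hπB heB
    set uA := G.wmap (altC x y m) c with huA
    set uB := G.wmap (altC y x m) c with huB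
    set c' := G.target (altC x y m) c with hc'
    -- v := uB.symm ∘ uA fixes the plane
    have hvx : uB.symm (uA (G.α x c)) = G.α x c := by
      rw [hagreex]
      exact uB.symm_apply_apply _
    have hvy : uB.symm (uA (G.α y c)) = G.α y c := by
      rw [hagreey]
      exact uB.symm_apply_apply _
    have hv'x : uA.symm (uB (G.α x c)) = G.α x c := by
      rw [← hagreex]
      exact uA.symm_apply_apply _
    have hv'y : uA.symm (uB (G.α y c)) = G.α y c := by
      rw [← hagreey]
      exact uA.symm_apply_apply _
    -- τ and τ'
    have hsymmB : ∀ β, G.InPl x y c' β → G.InPl x y c (uB.symm β) := by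
      intro β hβ
      have := G.wmap_symm_inPl (l := altC y x m) (c := c)
        (TwoL_swap (altC_twoL y x m)) (β := β) (by rw [ht]; exact hβ)
      exact this
    have hsymmA : ∀ β, G.InPl x y c' β → G.InPl x y c (uA.symm β) := by
      intro β hβ
      exact G.wmap_symm_inPl (l := altC x y m) (c := c) (altC_twoL x y m) hβ
    set τ : V := uB.symm πA - uB.symm πB with hτ
    set τ' : V := uA.symm πB - uA.symm πA with hτ'
    have hτpl : G.InPl x y c τ := G.InPl_sub (hsymmB _ hπA) (hsymmB _ hπB)
    have hτ'pl : G.InPl x y c τ' := G.InPl_sub (hsymmA _ hπB) (hsymmA _ hπA)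
    have hvn : uB.symm (uA (G.α n c)) = G.α n c + τ := by
      rw [heA, map_add]
      have : uB.symm (G.α n c') = G.α n c - uB.symm πB := by
        apply uB.injective
        rw [map_sub, uB.apply_symm_apply, uB.apply_symm_apply, heB]
        abel
      rw [this, hτ]
      abel
    have hv'n : uA.symm (uB (G.α n c)) = G.α n c + τ' := by
      rw [heB, map_add]
      have : uA.symm (G.α n c') = G.α n c - uA.symm πA := by
        apply uA.injective
        rw [map_sub, uA.apply_symm_apply, uA.apply_symm_apply, heA]
        abel
      rw [this, hτ']
      abel
    -- v' fixes τ (plane element)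
    have hfix : ∀ β, G.InPl x y c β → uA.symm (uB β) = β := by
      intro β hβ
      conv_lhs => rw [G.InPl_decomp hxy hβ]
      simp only [map_add, map_smul]
      rw [hv'x, hv'y]
      exact (G.InPl_decomp hxy hβ).symm
    have hsum : τ + τ' = 0 := by
      have h1 : uA.symm (uB (uB.symm (uA (G.α n c)))) = G.α n c := by
        rw [uB.apply_symm_apply, uA.symm_apply_apply]
      rw [hvn, map_add, map_add, hv'n, hfix τ hτpl] at h1
      have hthis : G.α n c + τ' + τ = G.α n c := h1
      have h4 : G.α n c + (τ' + τ) = G.α n c + 0 := by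
        rw [add_zero, ← add_assoc]
        exact hthis
      have h5 := add_left_cancel h4
      rw [add_comm] at h5
      exact h5
    -- positivity of coordinates
    have hroots : ∀ (w₁ w₂ : V ≃ₗ[ℝ] V), (∀ β ∈ G.root c, w₁ β ∈ G.root c') →
        (∀ β ∈ G.root c', w₂.symm β ∈ G.root c) → True := fun _ _ _ _ => trivial
    have hvroot : uB.symm (uA (G.α n c)) ∈ G.root c := by
      have h1 : uA (G.α n c) ∈ G.root c' := G.wmap_root (G.α_mem n c)
      have h2 : uA (G.α n c) ∈ G.root (G.target (altC y x m) c) := by rw [ht]; exact h1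
      exact G.wmap_symm_root h2
    have hv'root : uA.symm (uB (G.α n c)) ∈ G.root c := by
      have h1 : uB (G.α n c) ∈ G.root (G.target (altC y x m) c) := G.wmap_root (G.α_mem n c)
      have h2 : uB (G.α n c) ∈ G.root c' := by rw [← ht]; exact h1
      exact G.wmap_symm_root h2
    have hco : ∀ (τ₀ : V), G.InPl x y c τ₀ → ∀ m', (G.bas c).repr (G.α n c + τ₀) m'
        = (if n = m' then 1 else 0) + (G.bas c).repr τ₀ m' := by
      intro τ₀ _ m'
      rw [map_add]
      simp only [Finsupp.coe_add, Pi.add_apply]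
      rw [G.repr_alpha]
    have hvpos : uB.symm (uA (G.α n c)) ∈ G.pos c := by
      apply G.root_pos_of_coord_pos hvroot (m := n)
      rw [hvn, hco τ hτpl n, if_pos rfl, hτpl n hnx hny]
      norm_num
    have hv'pos : uA.symm (uB (G.α n c)) ∈ G.pos c := by
      apply G.root_pos_of_coord_pos hv'root (m := n)
      rw [hv'n, hco τ' hτ'pl n, if_pos rfl, hτ'pl n hnx hny]
      norm_num
    have hτx : 0 ≤ (G.bas c).repr τ x := by
      have := G.pos_coords hvpos x
      rw [hvn, hco τ hτpl x, if_neg hnx] at this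
      linarith
    have hτy : 0 ≤ (G.bas c).repr τ y := by
      have := G.pos_coords hvpos y
      rw [hvn, hco τ hτpl y, if_neg hny] at this
      linarith
    have hτ'x : 0 ≤ (G.bas c).repr τ' x := by
      have := G.pos_coords hv'pos x
      rw [hv'n, hco τ' hτ'pl x, if_neg hnx] at this
      linarith
    have hτ'y : 0 ≤ (G.bas c).repr τ' y := by
      have := G.pos_coords hv'pos y
      rw [hv'n, hco τ' hτ'pl y, if_neg hny] at this
      linarith
    have hτ0 : τ = 0 := by
      have hsx : (G.bas c).repr τ x + (G.bas c).repr τ' x = 0 := by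
        have := congrArg (fun z => (G.bas c).repr z x) hsum
        simpa using this
      have hsy : (G.bas c).repr τ y + (G.bas c).repr τ' y = 0 := by
        have := congrArg (fun z => (G.bas c).repr z y) hsum
        simpa using this
      apply G.InPl_ext hxy hτpl (fun n' h1 h2 => by simp : G.InPl x y c 0)
      · simp only [map_zero, Finsupp.coe_zero, Pi.zero_apply]
        linarith
      · simp only [map_zero, Finsupp.coe_zero, Pi.zero_apply]
        linarith
    -- conclude
    have : uB.symm (uA (G.α n c)) = G.α n c := by rw [hvn, hτ0, add_zero]
    have h3 := congrArg uB this
    rw [uB.apply_symm_apply] at h3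
    exact h3.symm
  -- wmap equality from agreement on the basis
  apply LinearEquiv.toLinearMap_injective
  apply (G.bas c).ext
  intro n
  simp only [LinearEquiv.coe_coe, G.bas_apply]
  exact hagree n

end GRS
namespace GRS

open scoped Classical

variable (G : GRS N A)

local notation "V" => (N →₀ ℝ)

lemma stepRoot_append (i : N) (w t : List N) (a : A) :
    G.stepRoot i (w ++ t) a = (G.wmap t a).symm (G.stepRoot i w (G.target t a)) := by
  unfold GRS.stepRoot
  rw [G.wmap_append, G.target_append]
  rfl

lemma stepRoot_congr {a : A} {l l' : List N} (h : G.Eqv a l l') (i : N) :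
    G.stepRoot i l' a = G.stepRoot i l a := by
  unfold GRS.stepRoot
  rw [h.1, h.2]

/-- statement C3 : exchange for alternating words -/
def StC3 (mm : ℕ) : Prop :=
  ∀ (x y : N), x ≠ y → ∀ (c : A),
    G.eta x y c mm ∈ -G.pos c →
    ∃ v', v'.length < mm ∧ G.Eqv c (altC x y mm) (altP x y mm :: v')

/-- statement C : exchange for all-increasing words -/
def StC (k : ℕ) : Prop :=
  ∀ (s : List N) (a : A) (i : N), s.length = k → G.AllInc s a →
    G.stepRoot i s a ∈ -G.pos a →
    ∃ s', s'.length < k ∧ G.Eqv a s (i :: s')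

/-- statement C∀ : exchange for arbitrary words -/
def StCall (k : ℕ) : Prop :=
  ∀ (w : List N) (c : A) (i : N), w.length = k →
    G.stepRoot i w c ∈ -G.pos c →
    ∃ w', w'.length < k ∧ G.Eqv c w (i :: w')

/-- statement D : shortening of non-all-increasing words -/
def StD (k : ℕ) : Prop :=
  ∀ (w : List N) (a : A), w.length = k → ¬ G.AllInc w a →
    ∃ w', w'.length < k ∧ G.Eqv a w w'

lemma megaD [Nonempty N] (k : ℕ) (hC : ∀ j, j < k → G.StC j) : G.StD k := by
  intro w a hlen hninc
  obtain ⟨pre, i, t, heq, hinc, hneg⟩ := G.exists_decrease hninc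
  have hlt : t.length < k := by
    rw [← hlen, heq]
    simp only [List.length_append, List.length_cons]
    omega
  obtain ⟨t', hlt', hEqv⟩ := hC t.length hlt t a i rfl hinc hneg
  refine ⟨pre ++ t', ?_, ?_⟩
  · rw [← hlen, heq]
    simp only [List.length_append, List.length_cons]
    omega
  · rw [heq]
    have h1 : G.Eqv a (pre ++ i :: t) (pre ++ i :: i :: t') :=
      G.Eqv_append_left pre (G.Eqv_cons i hEqv)
    have h2 : G.Eqv a (pre ++ i :: i :: t') (pre ++ t') :=
      G.Eqv_append_left pre (G.Eqv_cancel a i t')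
    exact G.Eqv_trans h1 h2

lemma megaC3 [Nonempty N] (mm : ℕ)
    (pack : ∀ j, j < mm → G.StC3 j ∧ G.StC j ∧ G.StCall j ∧ G.StD j) :
    G.StC3 mm := by
  intro x y hxy c hneg
  have hm1 : 1 ≤ mm := by
    rcases Nat.eq_zero_or_pos mm with h0 | h0
    · exfalso
      rw [h0, G.eta_zero] at hneg
      exact G.pos_neg_false (G.alpha_pos c x) (Set.mem_neg.mp hneg)
    · exact h0
  have hex : ∃ r, G.eta x y c r ∈ -G.pos c := ⟨mm, hneg⟩
  set rs := Nat.find hex with hrs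
  have hrsneg : G.eta x y c rs ∈ -G.pos c := Nat.find_spec hex
  have hrsle : rs ≤ mm := Nat.find_min' hex hneg
  have hposmin : ∀ r, r < rs → G.eta x y c r ∈ G.pos c := by
    intro r hr
    rcases G.root_pos_or_neg (G.eta_root x y c r) with hp | hp
    · exact hp
    · exact absurd (Set.mem_neg.mpr hp) (Nat.find_min hex hr)
  rcases Nat.lt_or_ge rs mm with hlt | hge
  · -- rs < mm : shorten inside and use StCall
    have hrs1 : 1 ≤ rs := by
      rcases Nat.eq_zero_or_pos rs with h0 | h0
      · exfalso
        rw [h0, G.eta_zero] at hrsneg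
        exact G.pos_neg_false (G.alpha_pos c x) (Set.mem_neg.mp hrsneg)
      · exact h0
    obtain ⟨hC3rs, _, _, _⟩ := pack rs hlt
    obtain ⟨z, hzlen, hzEqv⟩ := hC3rs x y hxy c hrsneg
    -- altC x y (rs+1) ≡ z
    have h1 : G.Eqv c (altC x y (rs + 1)) (altP x y rs :: altP x y rs :: z) := by
      rw [altC_succ]
      exact G.Eqv_cons _ hzEqv
    have h2 : G.Eqv c (altC x y (rs + 1)) z :=
      G.Eqv_trans h1 (G.Eqv_cancel c (altP x y rs) z)
    obtain ⟨pre, hpre⟩ := altC_suffix x y (show rs + 1 ≤ mm by omega)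
    have h3 : G.Eqv c (altC x y mm) (pre ++ z) := by
      rw [hpre]
      exact G.Eqv_append_left pre h2
    have hWlen : (pre ++ z).length < mm := by
      have : (altC x y mm).length = pre.length + (altC x y (rs + 1)).length := by
        rw [hpre, List.length_append]
      rw [altC_length, altC_length] at this
      simp only [List.length_append]
      omega
    have hstepW : G.stepRoot (altP x y mm) (pre ++ z) c ∈ -G.pos c := by
      rw [G.stepRoot_congr h3]
      exact hneg
    obtain ⟨_, _, hCallW, _⟩ := pack (pre ++ z).length hWlen
    obtain ⟨w', hw'len, hw'Eqv⟩ := hCallW (pre ++ z) c (altP x y mm) rfl hstepW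
    exact ⟨w', by omega, G.Eqv_trans h3 hw'Eqv⟩
  · -- rs = mm : pure braid case
    have hrseq : rs = mm := by omega
    rw [hrseq] at hposmin
    have hbraid := G.BRAID hxy hposmin hneg
    have hpe2 : altP y x (mm - 1) = altP x y mm := by
      unfold altP
      rcases Nat.mod_two_eq_zero_or_one mm with h | h
      · rw [if_neg (by omega), if_pos h]
      · rw [if_pos (by omega), if_neg (by omega)]
    refine ⟨altC y x (mm - 1), by rw [altC_length]; omega, ?_⟩
    have hlist : altC y x mm = altP x y mm :: altC y x (mm - 1) := by
      conv_lhs => rw [show mm = (mm - 1) + 1 by omega, altC_succ]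
      rw [hpe2]
    rw [← hlist]
    exact hbraid

lemma megaC [Nonempty N] (k : ℕ)
    (pack : ∀ j, j < k → G.StC3 j ∧ G.StC j ∧ G.StCall j ∧ G.StD j)
    (hC3k : G.StC3 k) : G.StC k := by
  -- inner peeling recursion
  have PEEL : ∀ tlen : ℕ, ∀ (u v : N), u ≠ v → ∀ (r : ℕ), 1 ≤ r →
      ∀ (t : List N) (a : A), t.length = tlen → r + tlen = k →
      G.AllInc (altC u v r ++ t) a →
      G.stepRoot (altP u v r) (altC u v r ++ t) a ∈ -G.pos a →
      ∃ s', s'.length < k ∧ G.Eqv a (altC u v r ++ t) (altP u v r :: s') := by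
    intro tlen
    induction tlen using Nat.strong_induction_on with
    | _ tlen ihPEEL =>
      intro u v huv r hr t a htlen hk hinc hstep
      have hc : G.target t a = G.target t a := rfl
      -- the chain root at the junction
      rw [G.stepRoot_append] at hstep
      have hetaroot : G.stepRoot (altP u v r) (altC u v r) (G.target t a)
          ∈ G.root (G.target t a) := G.stepRoot_root _ _ _
      rcases G.root_pos_or_neg hetaroot with hpc | hpc
      · -- positive at the junction : continue peeling or contradiction
        -- decompose η = k1 • α u + k2 • α v
        have hη : G.stepRoot (altP u v r) (altC u v r) (G.target t a)
            = G.eta u v (G.target t a) r := rfl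
        have hplane := G.eta_plane u v (G.target t a) r
        obtain ⟨k1, hk1⟩ := G.nspan_coords hpc.2 u
        obtain ⟨k2, hk2⟩ := G.nspan_coords hpc.2 v
        have hdecomp := G.InPl_decomp huv (β := G.eta u v (G.target t a) r) (by
          rw [← hη]; exact hplane)
        rw [← hη, hk1, hk2] at hdecomp
        -- pull back to a
        have hcombo : (G.wmap t a).symm
            (G.stepRoot (altP u v r) (altC u v r) (G.target t a))
            = (k1 : ℝ) • G.stepRoot u t a + (k2 : ℝ) • G.stepRoot v t a := by
          conv_lhs => rw [hdecomp]
          rw [map_add, map_smul, map_smul]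
          rfl
        -- the u-step of the big word is increasing
        have hγu : G.stepRoot u t a ∈ G.pos a := by
          obtain ⟨pre1, hpre1⟩ := altC_suffix u v (show 1 ≤ r from hr)
          have hsub : G.AllInc (altC u v 1 ++ t) a := by
            apply G.allInc_suffix (x := pre1)
            rw [← List.append_assoc, ← hpre1]
            exact hinc
          have h1 : G.AllInc (u :: t) a := by
            have : altC u v 1 ++ t = u :: t := rfl
            rwa [this] at hsub
          rcases G.root_pos_or_neg (G.stepRoot_root u t a) with hp | hp
          · exact hp
          · exfalso
            obtain ⟨heqJ, _⟩ := G.Jset_cons_neg (Set.mem_neg.mpr hp)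
            unfold GRS.AllInc at h1
            rw [heqJ] at h1
            have hd1 : (G.Jset t a \ {-G.stepRoot u t a}).ncard ≤ (G.Jset t a).ncard :=
              Set.ncard_le_ncard Set.diff_subset (G.Jset_finite _ _)
            have hd2 := G.Jset_card_le t a
            rw [List.length_cons] at h1
            omega
        -- hence the v-step root must be negative
        have hγv : G.stepRoot v t a ∈ -G.pos a := by
          rcases G.root_pos_or_neg (G.stepRoot_root v t a) with hp | hp
          · exfalso
            have hroot : (G.wmap t a).symm
                (G.stepRoot (altP u v r) (altC u v r) (G.target t a)) ∈ G.root a :=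
              G.wmap_symm_root (G.stepRoot_root _ _ _)
            have hposmem := G.pos_of_combo2 hroot hγu hp k1 k2 hcombo
            exact G.pos_neg_false hposmem (Set.mem_neg.mp hstep)
          · exact Set.mem_neg.mpr hp
        -- exchange in t
        have htinc : G.AllInc t a := G.allInc_suffix hinc
        have htlt : t.length < k := by omega
        obtain ⟨_, hCt, _, _⟩ := pack t.length htlt
        obtain ⟨t', ht'len, ht'Eqv⟩ := hCt t a v rfl htinc hγv
        -- rebuild the word
        have hlistnew : altC u v r ++ v :: t' = altC v u (r + 1) ++ t' := by
          rw [← altC_append u v r, List.append_assoc]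
          rfl
        have hEqvnew : G.Eqv a (altC u v r ++ t) (altC v u (r + 1) ++ t') := by
          rw [← hlistnew]
          exact G.Eqv_append_left _ ht'Eqv
        have hlen1 : (altC u v r ++ t).length ≤ (altC v u (r + 1) ++ t').length := by
          apply G.Eqv_length_ge hinc hEqvnew
        have ht'exact : t'.length = tlen - 1 := by
          simp only [List.length_append, altC_length] at hlen1
          omega
        have hincnew : G.AllInc (altC v u (r + 1) ++ t') a := by
          apply G.AllInc_of_eqv hinc hEqvnew
          simp only [List.length_append, altC_length]
          omega
        have hstepnew : G.stepRoot (altP v u (r + 1)) (altC v u (r + 1) ++ t') a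
            ∈ -G.pos a := by
          rw [altP_succ v u r, G.stepRoot_congr hEqvnew, G.stepRoot_append]
          exact hstep
        obtain ⟨s'', hs''len, hs''Eqv⟩ := ihPEEL (tlen - 1) (by omega) v u (Ne.symm huv)
          (r + 1) (by omega) t' a ht'exact (by omega) hincnew hstepnew
        rw [altP_succ v u r] at hs''Eqv
        exact ⟨s'', hs''len, G.Eqv_trans hEqvnew hs''Eqv⟩
      · -- negative at the junction : apply C3 at the target of t
        have hC3r : G.StC3 r := by
          rcases Nat.lt_or_ge r k with h | h
          · exact (pack r h).1
          · have : r = k := by omega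
            rw [this]
            exact hC3k
        obtain ⟨z, hzlen, hzEqv⟩ := hC3r u v huv (G.target t a) (Set.mem_neg.mpr hpc)
        refine ⟨z ++ t, ?_, ?_⟩
        · simp only [List.length_append]
          omega
        · have h1 : G.Eqv a (altC u v r ++ t) ((altP u v r :: z) ++ t) :=
            G.Eqv_append_right t hzEqv
          have : (altP u v r :: z) ++ t = altP u v r :: (z ++ t) := rfl
          rw [this] at h1
          exact h1
  -- the main statement
  intro s a i hlen hinc hstep
  match s, hlen with
  | [], hlen =>
    exfalso
    have : G.stepRoot i [] a = G.α i a := by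
      unfold GRS.stepRoot
      simp
    rw [this] at hstep
    exact G.pos_neg_false (G.alpha_pos a i) (Set.mem_neg.mp hstep)
  | j :: t, hlen =>
    by_cases hij : i = j
    · subst hij
      exact ⟨t, by simp only [List.length_cons] at hlen; omega, G.Eqv_rfl a (i :: t)⟩
    · have hjt : altC j i 1 ++ t = j :: t := rfl
      have hp1 : altP j i 1 = i := by
        unfold altP
        norm_num
      obtain ⟨s', hs'len, hs'Eqv⟩ := PEEL t.length j i (Ne.symm hij) 1 le_rfl t a rfl
        (by simp only [List.length_cons] at hlen; omega)
        (by rw [hjt]; exact hinc)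
        (by rw [hjt, hp1]; exact hstep)
      rw [hjt, hp1] at hs'Eqv
      exact ⟨s', by omega, hs'Eqv⟩

lemma megaCall [Nonempty N] (k : ℕ)
    (pack : ∀ j, j < k → G.StC3 j ∧ G.StC j ∧ G.StCall j ∧ G.StD j)
    (hCk : G.StC k) (hDk : G.StD k) : G.StCall k := by
  intro w c i hlen hstep
  by_cases hinc : G.AllInc w c
  · exact hCk w c i hlen hinc hstep
  · obtain ⟨w₁, hw₁len, hw₁Eqv⟩ := hDk w c hlen hinc
    have hstep₁ : G.stepRoot i w₁ c ∈ -G.pos c := by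
      rw [G.stepRoot_congr hw₁Eqv]
      exact hstep
    obtain ⟨_, _, hCall₁, _⟩ := pack w₁.length (by omega)
    obtain ⟨w', hw'len, hw'Eqv⟩ := hCall₁ w₁ c i rfl hstep₁
    exact ⟨w', by omega, G.Eqv_trans hw₁Eqv hw'Eqv⟩

lemma mega [Nonempty N] : ∀ k, G.StC3 k ∧ G.StC k ∧ G.StCall k ∧ G.StD k := by
  intro k
  induction k using Nat.strong_induction_on with
  | _ k pack =>
    have hD : G.StD k := G.megaD k (fun j hj => (pack j hj).2.1)
    have hC3 : G.StC3 k := G.megaC3 k pack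
    have hC : G.StC k := G.megaC k pack hC3
    have hCall : G.StCall k := G.megaCall k pack hC hD
    exact ⟨hC3, hC, hCall, hD⟩

lemma shorten_aux [Nonempty N] : ∀ (k : ℕ) (l : List N) (a : A), l.length = k →
    ∃ l', G.Eqv a l l' ∧ l'.length = (G.Jset l a).ncard := by
  intro k
  induction k using Nat.strong_induction_on with
  | _ k ih =>
    intro l a hlen
    by_cases hinc : G.AllInc l a
    · refine ⟨l, G.Eqv_rfl a l, ?_⟩
      unfold GRS.AllInc at hinc
      omega
    · obtain ⟨l₁, hl₁, hEqv⟩ := (G.mega l.length).2.2.2 l a rfl hinc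
      obtain ⟨l₂, hEqv₂, hlen₂⟩ := ih l₁.length (by omega) l₁ a rfl
      refine ⟨l₂, G.Eqv_trans hEqv hEqv₂, ?_⟩
      rw [hlen₂, G.Jset_congr hEqv.1 hEqv.2]

lemma shorten [Nonempty N] (l : List N) (a : A) :
    ∃ l', G.Eqv a l l' ∧ l'.length = (G.Jset l a).ncard :=
  G.shorten_aux l.length l a rfl

end GRS
namespace GRS

open scoped Classical

variable (G : GRS N A)

local notation "V" => (N →₀ ℝ)

lemma inv_eq_image [Nonempty N] (l : List N) (a : A) :
    ⇑(G.wmap l a) '' G.pos a ∩ -G.pos (G.target l a)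
      = ⇑(G.wmap l a) '' G.Jset l a := by
  ext β
  constructor
  · rintro ⟨⟨γ, hγ, rfl⟩, h2⟩
    exact ⟨γ, ⟨hγ, h2⟩, rfl⟩
  · rintro ⟨γ, ⟨h1, h2⟩, rfl⟩
    exact ⟨⟨γ, h1, rfl⟩, h2⟩

theorem stmt12' [Nonempty N] (l : List N) (a : A) :
    (⇑(G.wmap l a) '' G.pos a ∩ -G.pos (G.target l a)).Finite ∧
    G.len l a = (⇑(G.wmap l a) '' G.pos a ∩ -G.pos (G.target l a)).ncard := by
  have himg := G.inv_eq_image l a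
  have hfin : (G.Jset l a).Finite := G.Jset_finite l a
  have hcard : (⇑(G.wmap l a) '' G.Jset l a).ncard = (G.Jset l a).ncard :=
    Set.ncard_image_of_injective _ (G.wmap l a).injective
  constructor
  · rw [himg]
    exact hfin.image _
  · rw [himg, hcard]
    unfold GRS.len
    apply le_antisymm
    · obtain ⟨l', ⟨ht, hw⟩, hlen⟩ := G.shorten l a
      apply Nat.sInf_le
      exact ⟨l', hlen, ht, hw⟩
    · have hne : {m | ∃ l' : List N, l'.length = m ∧
          G.target l' a = G.target l a ∧ G.wmap l' a = G.wmap l a}.Nonempty :=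
        ⟨l.length, ⟨l, rfl, rfl, rfl⟩⟩
      apply le_csInf hne
      rintro mM ⟨l', hlen, ht, hw⟩
      rw [← hlen]
      have h1 := G.Jset_card_le l' a
      rw [G.Jset_congr ht hw] at h1
      exact h1

end GRS

/-- Lemma (iii): `ℓ(w) = |w(R⁺_a) ∩ (−R⁺_b)|`. -/
theorem stmt12 [Nonempty N] [Nonempty A] (G : GRS N A) (l : List N) (hl : l ≠ [])
    (a : A) :
    (⇑(G.wmap l a) '' G.pos a ∩ -G.pos (G.target l a)).Finite ∧
    G.len l a = (⇑(G.wmap l a) '' G.pos a ∩ -G.pos (G.target l a)).ncard :=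
  G.stmt12' l a
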